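/- arXiv:1109.3641 — 3 statements merged into one kernel-verified Lean document; each statement's English description precedes it below -/
import Mathlib

section
/- There is a bijection, preserving the number of ascents, between ascent sequences of length n avoiding the pattern 101 and permutations of length n avoiding the pattern 312. -/
/-- Number of ascents (adjacent strict rises) in a list of naturals. -/
def ascList (l : List ℕ) : ℕ :=
  (l.zip l.tail).countP (fun p => decide (p.1 < p.2))

/-- `l` is an ascent sequence: nonempty, starts with 0, and each later letter is at most
one more than the number of ascents in the preceding prefix. -/
def IsAscSeq (l : List ℕ) : Prop :=
  l ≠ [] ∧ l.getD 0 0 = 0 ∧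
    ∀ i, 0 < i → i < l.length → l.getD i 0 ≤ ascList (l.take i) + 1

/-- A sequence contains the pattern 101. -/
def Contains101 (l : List ℕ) : Prop :=
  ∃ i j k, i < j ∧ j < k ∧ k < l.length ∧
    l.getD j 0 < l.getD i 0 ∧ l.getD i 0 = l.getD k 0

/-- A list (viewed as a permutation word) contains the pattern 312. -/
def Contains312 (l : List ℕ) : Prop :=
  ∃ i j k, i < j ∧ j < k ∧ k < l.length ∧
    l.getD j 0 < l.getD k 0 ∧ l.getD k 0 < l.getD i 0

open List

@[simp] lemma ascList_nil : ascList [] = 0 := rfl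
@[simp] lemma ascList_single (a : ℕ) : ascList [a] = 0 := rfl

lemma ascList_cons_cons (a b : ℕ) (l : List ℕ) :
    ascList (a :: b :: l) = (if a < b then 1 else 0) + ascList (b :: l) := by
  simp only [ascList, List.tail_cons, List.zip_cons_cons, List.countP_cons]
  split <;> simp_all <;> omega

/-- `ascList` of an append splits at a repeated junction element. -/
lemma ascList_append_cons (u : List ℕ) (z : ℕ) (v : List ℕ) :
    ascList (u ++ z :: v) = ascList (u ++ [z]) + ascList (z :: v) := by
  induction u with
  | nil => simp
  | cons a u ih =>
    cases u with
    | nil => simp [ascList_cons_cons]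
    | cons b t => simp only [List.cons_append, ascList_cons_cons] at *; omega

lemma ascList_concat (u : List ℕ) (z : ℕ) (h : u ≠ []) :
    ascList (u ++ [z]) = ascList u + (if u.getLast h < z then 1 else 0) := by
  induction u with
  | nil => simp at h
  | cons a u ih =>
    cases u with
    | nil =>
      simp [ascList_cons_cons, List.getLast_singleton]
      exact if_congr Iff.rfl rfl rfl
    | cons b t =>
      have ihh := ih (by simp)
      simp only [List.cons_append] at ihh ⊢
      rw [ascList_cons_cons, ihh, ascList_cons_cons a b t, List.getLast_cons_cons]
      omega

lemma ascList_concat_of_not_lt (u : List ℕ) (z : ℕ) (h : ∀ x ∈ u, ¬ x < z) :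
    ascList (u ++ [z]) = ascList u := by
  rcases eq_or_ne u [] with rfl | hne
  · simp
  · rw [ascList_concat u z hne, if_neg (h _ (List.getLast_mem hne))]; omega


lemma ascList_le_concat (u : List ℕ) (z : ℕ) : ascList u ≤ ascList (u ++ [z]) := by
  rcases eq_or_ne u [] with rfl | hne
  · simp
  · rw [ascList_concat u z hne]; omega

@[simp] lemma ascList_map_add (c : ℕ) (l : List ℕ) :
    ascList (List.map (· + c) l) = ascList l := by
  induction l with
  | nil => simp
  | cons a l ih =>
    cases l with
    | nil => simp
    | cons b t =>
      simp only [List.map_cons] at *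
      rw [ascList_cons_cons, ascList_cons_cons a b t, ih]
      simp

/-- Inductive form of ascent sequences. -/
inductive AS : List ℕ → Prop
  | base : AS [0]
  | snoc (l : List ℕ) (z : ℕ) : AS l → z ≤ ascList l + 1 → AS (l ++ [z])

lemma AS_head : ∀ {l : List ℕ}, AS l → ∃ t, l = 0 :: t := by
  intro l h
  induction h with
  | base => exact ⟨[], rfl⟩
  | snoc l z _ _ ih => obtain ⟨t, rfl⟩ := ih; exact ⟨t ++ [z], rfl⟩

lemma AS_ne_nil {l : List ℕ} (h : AS l) : l ≠ [] := by
  obtain ⟨t, rfl⟩ := AS_head h; simp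

/-- Every entry of an ascent sequence is at most the number of ascents. -/
lemma AS_mem_le {l : List ℕ} (h : AS l) : ∀ x ∈ l, x ≤ ascList l := by
  induction h with
  | base => simp
  | snoc l z hl hz ih =>
    intro x hx
    rcases Nat.lt_or_ge (ascList l) z with hlt | hle
    · -- z = ascList l + 1, and the last entry of l is < z, giving a new ascent
      have hz' : z = ascList l + 1 := by omega
      have hlast : l.getLast (AS_ne_nil hl) < z := by
        have := ih _ (List.getLast_mem (AS_ne_nil hl)); omega
      have : ascList (l ++ [z]) = ascList l + 1 := by
        rw [ascList_concat l z (AS_ne_nil hl), if_pos hlast]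
      rw [this]
      rcases List.mem_append.mp hx with h' | h'
      · exact le_trans (ih _ h') (by omega)
      · simp at h'; omega
    · have hasc := ascList_le_concat l z
      rcases List.mem_append.mp hx with h' | h'
      · exact le_trans (ih _ h') hasc
      · simp at h'; omega

/-- 101-avoidance, sublist form. -/
def N101 (l : List ℕ) : Prop := ¬ ∃ a b, a < b ∧ [b, a, b] <+ l

/-- 312-avoidance, sublist form. -/
def N312 (l : List ℕ) : Prop := ¬ ∃ a b c, a < b ∧ b < c ∧ [c, a, b] <+ l

lemma N101.sublist {l l' : List ℕ} (h : N101 l) (hs : l' <+ l) : N101 l' :=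
  fun ⟨a, b, hab, hsub⟩ => h ⟨a, b, hab, hsub.trans hs⟩

lemma N312.sublist {l l' : List ℕ} (h : N312 l) (hs : l' <+ l) : N312 l' :=
  fun ⟨a, b, c, hab, hbc, hsub⟩ => h ⟨a, b, c, hab, hbc, hsub.trans hs⟩

lemma not_triple_sublist_singleton {a b c d : ℕ} (h : [a,b,c] <+ [d]) : False := by
  have := h.length_le; simp at this

lemma N101_singleton (a : ℕ) : N101 [a] :=
  fun ⟨_, _, _, hsub⟩ => not_triple_sublist_singleton hsub

/-- In a 101-avoiding ascent sequence, every value up to the number of ascents occurs. -/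
lemma AS_mem_of_le {l : List ℕ} (h : AS l) (hN : N101 l) :
    ∀ m, m ≤ ascList l → m ∈ l := by
  induction h with
  | base => intro m hm; simp at hm ⊢; omega
  | snoc l z hl hz ih =>
    have hNl : N101 l := hN.sublist (by simp)
    intro m hm
    have hne := AS_ne_nil hl
    rcases Nat.lt_or_ge (l.getLast hne) z with hlt | hge
    · -- new ascent
      have hasc : ascList (l ++ [z]) = ascList l + 1 := by
        rw [ascList_concat l z hne, if_pos hlt]
      rcases Nat.lt_or_ge (ascList l) m with hm2 | hm2
      · -- m = ascList l + 1 : show z = m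
        have hzval : z = ascList l + 1 := by
          rcases Nat.lt_or_ge (ascList l) z with h2 | h2
          · omega
          · -- z ≤ ascList l : z occurs in l, contradiction with N101
            exfalso
            have hz1 : 1 ≤ z := by
              have := AS_mem_le hl _ (List.getLast_mem hne); omega
            have hzl : z ∈ l := ih hNl z h2
            have hzdrop : z ∈ l.dropLast := by
              have hdl := List.dropLast_append_getLast hne
              rcases (List.mem_append.mp (by rw [hdl]; exact hzl)) with h' | h'
              · exact h'
              · simp at h'; omega
            have hsub : [z, l.getLast hne, z] <+ l ++ [z] := by
              have h1 : [z] <+ l.dropLast := List.singleton_sublist.mpr hzdrop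
              have h2 : ([z] ++ ([l.getLast hne] ++ [z])) <+
                  (l.dropLast ++ ([l.getLast hne] ++ [z])) :=
                h1.append (List.Sublist.refl _)
              have : l.dropLast ++ ([l.getLast hne] ++ [z]) = l ++ [z] := by
                rw [← List.append_assoc, List.dropLast_append_getLast hne]
              rwa [this] at h2
            exact hN ⟨l.getLast hne, z, hlt, hsub⟩
        have : m = z := by omega
        subst this; simp
      · have := ih hNl m hm2; simp [this]
    · -- no new ascent
      have hasc : ascList (l ++ [z]) = ascList l := by
        rw [ascList_concat l z hne, if_neg (by omega)]; omega
      have := ih hNl m (by omega); simp [this]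

lemma ascList_append_zero (u : List ℕ) : ascList (u ++ [0]) = ascList u :=
  ascList_concat_of_not_lt u 0 (by simp)

lemma ascList_graft (v : List ℕ) (c : ℕ) (hc : 1 ≤ c) {w : List ℕ} (hw : AS w) :
    ascList ((v ++ [0]) ++ List.map (· + c) w) = ascList v + 1 + ascList w := by
  obtain ⟨t, rfl⟩ := AS_head hw
  have : List.map (· + c) (0 :: t) = c :: List.map (· + c) t := by simp
  have hlast : (v ++ [0]).getLast (by simp) = 0 := by simp [List.getLast_append]
  rw [this, ascList_append_cons, ascList_concat (v ++ [0]) c (by simp), hlast,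
    if_pos (by omega), ascList_append_zero]
  have : (c :: List.map (· + c) t) = List.map (· + c) (0 :: t) := by simp
  rw [this, ascList_map_add]

lemma AS_graft {v : List ℕ} (hv : AS (v ++ [0])) {w : List ℕ} (hw : AS w) :
    AS ((v ++ [0]) ++ List.map (· + (ascList v + 1)) w) := by
  set c := ascList v + 1 with hc
  induction hw with
  | base =>
    have : List.map (· + c) [0] = [c] := by simp
    rw [this]
    exact AS.snoc _ c hv (by rw [ascList_append_zero]; try omega)
  | snoc l z hl hz ih =>
    rw [List.map_append, ← List.append_assoc]
    have : List.map (· + c) [z] = [z + c] := by simp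
    rw [this]
    refine AS.snoc _ (z + c) ih ?_
    rw [ascList_graft v c (by omega) hl]
    omega

lemma triple_split {x y z : ℕ} {L1 L2 : List ℕ} (h : [x,y,z] <+ L1 ++ L2) :
    ([x,y,z] <+ L1) ∨ ([x,y] <+ L1 ∧ [z] <+ L2) ∨ ([x] <+ L1 ∧ [y,z] <+ L2) ∨
      ([x,y,z] <+ L2) := by
  rw [List.sublist_append_iff] at h
  obtain ⟨r1, r2, heq, h1, h2⟩ := h
  rcases r1 with _ | ⟨a1, _ | ⟨a2, _ | ⟨a3, r⟩⟩⟩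
  · simp at heq; subst heq; tauto
  · simp at heq; obtain ⟨rfl, rfl⟩ := heq; tauto
  · simp at heq; obtain ⟨rfl, rfl, rfl⟩ := heq; tauto
  · have hlen := congrArg List.length heq
    simp at hlen
    have : r = [] := by
      cases r with | nil => rfl | cons _ _ => simp at hlen
    subst this
    simp at heq
    obtain ⟨rfl, rfl, rfl, rfl⟩ := heq
    tauto
def goodA (l : List ℕ) : Prop := AS l ∧ N101 l

lemma mem_map_add_ge {c x : ℕ} {w : List ℕ} (h : x ∈ List.map (· + c) w) : c ≤ x := by
  obtain ⟨y, _, rfl⟩ := List.mem_map.mp h; omega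

lemma AS_compose {u w : List ℕ} (hu : u = [] ∨ AS u) (hw : w = [] ∨ AS w) :
    AS (u ++ 0 :: List.map (· + (ascList u + 1)) w) := by
  have hu0 : AS (u ++ [0]) := by
    rcases hu with rfl | hu
    · simpa using AS.base
    · exact AS.snoc u 0 hu (by omega)
  rcases hw with rfl | hw
  · simpa using hu0
  · have := AS_graft (v := u) hu0 hw
    simpa using this

lemma ascList_compose {u w : List ℕ} (hw : w = [] ∨ AS w) :
    ascList (u ++ 0 :: List.map (· + (ascList u + 1)) w) =
      ascList u + ascList w + (if w = [] then 0 else 1) := by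
  rcases hw with rfl | hw
  · simp [ascList_append_zero]
  · have := ascList_graft u (ascList u + 1) (by omega) hw
    rw [if_neg (AS_ne_nil hw)]
    rw [List.append_assoc, List.singleton_append] at this
    omega

lemma N101_compose {u w : List ℕ} (hu : u = [] ∨ goodA u) (hw : w = [] ∨ goodA w) :
    N101 (u ++ 0 :: List.map (· + (ascList u + 1)) w) := by
  set c := ascList u + 1 with hc
  rintro ⟨a, b, hab, hsub⟩
  have humem : ∀ x ∈ u, x ≤ c - 1 := by
    rcases hu with rfl | ⟨hu, _⟩
    · simp
    · intro x hx; have := AS_mem_le hu x hx; omega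
  rcases triple_split hsub with h | ⟨h1, h2⟩ | ⟨h1, h2⟩ | h
  · rcases hu with rfl | ⟨_, hN⟩
    · simpa using h.length_le
    · exact hN ⟨a, b, hab, h⟩
  · -- [b,a] in u, [b] in 0 :: map
    have hb : b ≤ c - 1 := humem b (h1.subset (by simp))
    rcases List.sublist_cons_iff.mp h2 with h2 | h2
    · exact absurd (mem_map_add_ge (List.singleton_sublist.mp h2)) (by omega)
    · -- b = 0
      obtain ⟨r, heq, -⟩ := h2
      simp at heq
      omega
  · -- [b] in u, [a,b] in 0 :: map
    have hb : b ≤ c - 1 := humem b (List.singleton_sublist.mp h1)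
    have hbmem : b ∈ 0 :: List.map (· + c) w := h2.subset (by simp)
    rcases List.mem_cons.mp hbmem with rfl | hbm
    · omega
    · exact absurd (mem_map_add_ge hbm) (by omega)
  · -- [b,a,b] in 0 :: map
    rcases List.sublist_cons_iff.mp h with h | h
    · -- all in map part: pull back
      rw [List.sublist_map_iff] at h
      obtain ⟨l', hl', heq⟩ := h
      rcases l' with _ | ⟨b', _ | ⟨a', _ | ⟨b'', r⟩⟩⟩ <;> simp at heq
      obtain ⟨rfl, rfl, hbb, hr⟩ := heq
      subst hr
      rcases hw with rfl | ⟨_, hN⟩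
      · simpa using hl'.length_le
      · refine hN ⟨a', b', by omega, ?_⟩
        have : b'' = b' := by omega
        rwa [this] at hl'
    · -- b = 0
      obtain ⟨r, heq, -⟩ := h
      simp at heq
      omega

lemma goodA_compose {u w : List ℕ} (hu : u = [] ∨ goodA u) (hw : w = [] ∨ goodA w) :
    goodA (u ++ 0 :: List.map (· + (ascList u + 1)) w) :=
  ⟨AS_compose (hu.imp id And.left) (hw.imp id And.left), N101_compose hu hw⟩

lemma A_split {l : List ℕ} (h : AS l) (hN : N101 l) :
    ∃ u w, (u = [] ∨ goodA u) ∧ (w = [] ∨ goodA w) ∧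
      l = u ++ 0 :: List.map (· + (ascList u + 1)) w := by
  induction h with
  | base => exact ⟨[], [], Or.inl rfl, Or.inl rfl, by simp⟩
  | snoc l z hl hz ih =>
    have hNl : N101 l := hN.sublist (by simp)
    obtain ⟨u, w, hu, hw, rfl⟩ := ih hNl
    set c := ascList u + 1 with hc
    rcases Nat.eq_zero_or_pos z with rfl | hz1
    · exact ⟨u ++ 0 :: List.map (· + c) w, [], Or.inr ⟨hl, hNl⟩, Or.inl rfl, by simp⟩
    · -- z ≥ 1; first show z ≥ c
      have hzc : c ≤ z := by
        by_contra hzc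
        push_neg at hzc
        -- z ≤ ascList u, so z ∈ u, and [z,0,z] is a 101 pattern
        have hune : u ≠ [] := by
          rintro rfl; simp [hc] at hzc; omega
        obtain ⟨hASu, hNu⟩ : goodA u := by tauto
        have hzu : z ∈ u := AS_mem_of_le hASu hNu z (by omega)
        obtain ⟨s, t, rfl⟩ := List.append_of_mem hzu
        have hsub : [z, 0, z] <+ (s ++ z :: t) ++ 0 :: List.map (· + c) w ++ [z] := by
          have core : [z, 0, z] <+ z :: (t ++ 0 :: (List.map (· + c) w ++ [z])) := by
            refine List.Sublist.cons₂ z ?_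
            refine List.Sublist.trans ?_ (List.sublist_append_right t _)
            refine List.Sublist.cons₂ 0 ?_
            exact List.Sublist.trans (by simp) (List.sublist_append_right _ [z])
          have : (s ++ z :: t) ++ 0 :: List.map (· + c) w ++ [z] =
              s ++ (z :: (t ++ 0 :: (List.map (· + c) w ++ [z]))) := by
            simp
          rw [this]
          exact List.Sublist.trans core (List.sublist_append_right s _)
        exact hN ⟨0, z, hz1, hsub⟩
      rcases hw with rfl | ⟨hASw, hNw⟩
      · -- w empty: z = c, new w = [0]
        have hzz : z = c := by
          have : ascList (u ++ 0 :: List.map (· + c) ([] : List ℕ)) = ascList u := by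
            simp [ascList_append_zero]
          rw [this] at hz
          omega
        refine ⟨u, [0], hu, Or.inr ⟨AS.base, N101_singleton 0⟩, ?_⟩
        simp [hzz, hc]
      · -- extend w by z - c
        refine ⟨u, w ++ [z - c], hu, Or.inr ⟨?_, ?_⟩, ?_⟩
        · refine AS.snoc w (z - c) hASw ?_
          have hasc := ascList_compose (u := u) (w := w) (Or.inr hASw)
          rw [if_neg (AS_ne_nil hASw)] at hasc
          rw [hasc] at hz
          omega
        · rintro ⟨a, b, hab, hsub⟩
          have hmap : [b + c, a + c, b + c] <+ List.map (· + c) (w ++ [z - c]) :=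
            List.Sublist.map (· + c) hsub
          have hmapeq : List.map (· + c) (w ++ [z - c]) = List.map (· + c) w ++ [z] := by
            simp [Nat.sub_add_cancel hzc]
          rw [hmapeq] at hmap
          refine hN ⟨a + c, b + c, by omega, ?_⟩
          have : u ++ 0 :: List.map (· + c) w ++ [z] =
              u ++ 0 :: (List.map (· + c) w ++ [z]) := by simp
          rw [this]
          exact hmap.trans ((List.sublist_cons_self 0 _).trans
            (List.sublist_append_right u _))
        · rw [← hc]
          have : List.map (· + c) (w ++ [z - c]) = List.map (· + c) w ++ [z] := by
            simp [Nat.sub_add_cancel hzc]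
          rw [this]
          simp
def goodB (m : ℕ) (l : List ℕ) : Prop := l.Perm (List.range' 1 m) ∧ N312 l

lemma map_add_comm (c : ℕ) (l : List ℕ) : List.map (· + c) l = List.map (c + ·) l := by
  simp [Nat.add_comm]

lemma perm_B_compose {a b : ℕ} {α β : List ℕ} (hα : α.Perm (List.range' 1 a))
    (hβ : β.Perm (List.range' 1 b)) :
    (List.map (· + 1) α ++ 1 :: List.map (· + (a + 1)) β).Perm
      (List.range' 1 (a + 1 + b)) := by
  have e1 : List.map (· + 1) (List.range' 1 a) = List.range' 2 a := by
    rw [map_add_comm, List.map_add_range']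
  have e2 : List.map (· + (a + 1)) (List.range' 1 b) = List.range' (a + 2) b := by
    rw [map_add_comm, List.map_add_range']
  have h1 : (List.map (· + 1) α).Perm (List.range' 2 a) := e1 ▸ hα.map (· + 1)
  have h2 : (List.map (· + (a + 1)) β).Perm (List.range' (a + 2) b) :=
    e2 ▸ hβ.map (· + (a + 1))
  calc List.map (· + 1) α ++ 1 :: List.map (· + (a + 1)) β
      ~ List.range' 2 a ++ 1 :: List.range' (a + 2) b := by
        exact (h1.append (h2.cons 1))
    _ ~ 1 :: (List.range' 2 a ++ List.range' (a + 2) b) := List.perm_middle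
    _ = List.range' 1 (a + 1 + b) := by
        have : List.range' 2 a ++ List.range' (2 + 1 * a) b = List.range' 2 (b + a) :=
          by rw [List.range'_append (s := 2) (m := a) (n := b) (step := 1), Nat.add_comm]
        rw [show (2 + 1 * a) = a + 2 by omega] at this
        rw [this, show (2:ℕ) = 1 + 1 from rfl, ← List.range'_succ]
        congr 1
        omega

lemma mem_map_le {c x : ℕ} {l : List ℕ} (hl : ∀ y ∈ l, y ≤ c) (h : x ∈ List.map (· + 1) l) :
    x ≤ c + 1 := by
  obtain ⟨y, hy, rfl⟩ := List.mem_map.mp h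
  have := hl y hy; omega

lemma N312_compose {a b : ℕ} {α β : List ℕ} (hα : goodB a α) (hβ : goodB b β) :
    N312 (List.map (· + 1) α ++ 1 :: List.map (· + (a + 1)) β) := by
  rintro ⟨x, y, z, hxy, hyz, hsub⟩
  -- pattern [z, x, y] with x < y < z
  have hαmem : ∀ v ∈ List.map (· + 1) α, 2 ≤ v ∧ v ≤ a + 1 := by
    intro v hv
    obtain ⟨u, hu, rfl⟩ := List.mem_map.mp hv
    have := List.mem_range'_1.mp (hα.1.subset hu)
    omega
  have hβmem : ∀ v ∈ List.map (· + (a + 1)) β, a + 2 ≤ v := by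
    intro v hv
    obtain ⟨u, hu, rfl⟩ := List.mem_map.mp hv
    have := List.mem_range'_1.mp (hβ.1.subset hu)
    omega
  rcases triple_split hsub with h | ⟨h1, h2⟩ | ⟨h1, h2⟩ | h
  · -- all in α part
    rw [List.sublist_map_iff] at h
    obtain ⟨l', hl', heq⟩ := h
    rcases l' with _ | ⟨z', _ | ⟨x', _ | ⟨y', r⟩⟩⟩ <;> simp at heq
    obtain ⟨rfl, rfl, rfl, hr⟩ := heq
    subst hr
    exact hα.2 ⟨x', y', z', by omega, by omega, hl'⟩
  · -- [z,x] in α part, [y] in rest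
    have hz := (hαmem z (h1.subset (by simp))).2
    rcases List.sublist_cons_iff.mp h2 with h2 | h2
    · have := hβmem y (List.singleton_sublist.mp h2); omega
    · obtain ⟨r, heq, -⟩ := h2
      simp at heq
      have := (hαmem x (h1.subset (by simp))).1
      omega
  · -- [z] in α part, [x,y] in rest
    have hz := (hαmem z (List.singleton_sublist.mp h1)).2
    rcases List.sublist_cons_iff.mp h2 with h2 | h2
    · have := hβmem y (h2.subset (by simp)); omega
    · obtain ⟨r, heq, hr⟩ := h2
      simp at heq
      obtain ⟨rfl, hry⟩ := heq
      have hy' : [y] <+ List.map (· + (a+1)) β := by rw [hry]; exact hr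
      have := hβmem y (List.singleton_sublist.mp hy')
      omega
  · -- [z,x,y] in 1 :: β part
    rcases List.sublist_cons_iff.mp h with h | h
    · rw [List.sublist_map_iff] at h
      obtain ⟨l', hl', heq⟩ := h
      rcases l' with _ | ⟨z', _ | ⟨x', _ | ⟨y', r⟩⟩⟩ <;> simp at heq
      obtain ⟨rfl, rfl, rfl, hr⟩ := heq
      subst hr
      exact hβ.2 ⟨x', y', z', by omega, by omega, hl'⟩
    · obtain ⟨r, heq, hr⟩ := h
      -- z = 1 and [x,y] <+ β part, but x < y < z = 1 impossible
      have : z = 1 := by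
        have := congrArg (List.getD · 0 0) heq; simpa using this
      omega

lemma ascList_B_compose {a b : ℕ} {α β : List ℕ} (hβ : β.Perm (List.range' 1 b)) :
    ascList (List.map (· + 1) α ++ 1 :: List.map (· + (a + 1)) β) =
      ascList α + ascList β + (if β = [] then 0 else 1) := by
  rw [ascList_append_cons, ascList_concat_of_not_lt _ _ (by intro x hx; simp at hx; omega),
    ascList_map_add]
  cases β with
  | nil => simp
  | cons h t =>
    have hh : 1 ≤ h := (List.mem_range'_1.mp (hβ.subset (by simp))).1
    rw [List.map_cons, ascList_cons_cons, if_pos (by omega), if_neg (by simp)]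
    have : ((h + (a + 1)) :: List.map (· + (a + 1)) t) = List.map (· + (a + 1)) (h :: t) := by
      simp
    rw [this, ascList_map_add]
    omega
lemma map_sub_shift (c s n : ℕ) :
    List.map (· - c) (List.range' (s + c) n) = List.range' s n := by
  have h0 : List.range' (s + c) n = List.map (fun x => c + x) (List.range' s n) := by
    rw [List.map_add_range', Nat.add_comm]
  rw [h0, List.map_map]
  refine (List.map_congr_left ?_).trans (List.map_id _)
  intro x _
  simp only [Function.comp_apply, id_eq]
  omega

lemma perm_split_lt {A B : List ℕ} {s k : ℕ} (h : (A ++ B).Perm (List.range' s k))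
    (hlt : ∀ x ∈ A, ∀ y ∈ B, x < y) :
    A.Perm (List.range' s A.length) ∧ B.Perm (List.range' (s + A.length) B.length) := by
  have hlen : A.length + B.length = k := by
    have := h.length_eq; simpa using this
  have hnd : (A ++ B).Nodup := h.nodup_iff.mpr (List.nodup_range' (s := s) (n := k))
  rw [List.nodup_append] at hnd
  obtain ⟨hndA, hndB, hdisj⟩ := hnd
  have hAub : ∀ x ∈ A, x < s + A.length := by
    intro x hx
    by_contra hge
    push_neg at hge
    have hxk : x < s + k := (List.mem_range'_1.mp (h.subset (List.mem_append_left B hx))).2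
    have hBsub : B ⊆ List.range' (x + 1) (s + k - x - 1) := by
      intro y hy
      have h1 : x < y := hlt x hx y hy
      have h2 : y < s + k := (List.mem_range'_1.mp (h.subset (List.mem_append_right A hy))).2
      rw [List.mem_range'_1]
      omega
    have := (hndB.subperm hBsub).length_le
    rw [List.length_range'] at this
    omega
  have hAsub : A ⊆ List.range' s A.length := by
    intro x hx
    have h1 := (List.mem_range'_1.mp (h.subset (List.mem_append_left B hx))).1
    rw [List.mem_range'_1]
    exact ⟨h1, hAub x hx⟩
  have hAperm : A.Perm (List.range' s A.length) := by
    refine (hndA.subperm hAsub).perm_of_length_le ?_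
    rw [List.length_range']
  have hsplit : List.range' s A.length ++ List.range' (s + A.length) B.length =
      List.range' s k := by
    have := List.range'_append (s := s) (m := A.length) (n := B.length) (step := 1)
    rw [show s + 1 * A.length = s + A.length by omega] at this
    rw [this]
    congr 1
  have hcomp : (List.range' s A.length ++ B).Perm
      (List.range' s A.length ++ List.range' (s + A.length) B.length) :=
    calc List.range' s A.length ++ B ~ A ++ B := hAperm.symm.append_right B
      _ ~ List.range' s k := h
      _ = _ := hsplit.symm
  exact ⟨hAperm, (List.perm_append_left_iff _).mp hcomp⟩

lemma B_split {m : ℕ} {l : List ℕ} (hm : 1 ≤ m) (hp : l.Perm (List.range' 1 m))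
    (hN : N312 l) :
    ∃ (a b : ℕ) (α β : List ℕ), m = a + 1 + b ∧ goodB a α ∧ goodB b β ∧
      l = List.map (· + 1) α ++ 1 :: List.map (· + (a + 1)) β := by
  have h1l : 1 ∈ l := hp.mem_iff.mpr (List.mem_range'_1.mpr (by omega))
  obtain ⟨A, B, rfl⟩ := List.append_of_mem h1l
  have hAB : (A ++ B).Perm (List.range' 2 (m - 1)) := by
    have h1 : (A ++ 1 :: B).Perm (1 :: (A ++ B)) := List.perm_middle
    have h2 : ((1 : ℕ) :: (A ++ B)).Perm (List.range' 1 m) := h1.symm.trans hp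
    have h3 : List.range' 1 m = 1 :: List.range' 2 (m - 1) := by
      conv_lhs => rw [show m = (m - 1) + 1 by omega]
      rw [List.range'_succ]
    rw [h3] at h2
    exact h2.cons_inv
  have hnd : (A ++ 1 :: B).Nodup := hp.nodup_iff.mpr (List.nodup_range' (s := 1) (n := m))
  have hndAB : (A ++ B).Nodup := (List.nodup_cons.mp (List.nodup_middle.mp hnd)).2
  have hmem2 : ∀ x ∈ A ++ B, 2 ≤ x ∧ x ≤ m := by
    intro x hx
    have := List.mem_range'_1.mp (hAB.subset hx)
    omega
  have hlt : ∀ x ∈ A, ∀ y ∈ B, x < y := by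
    intro x hx y hy
    have hx2 := (hmem2 x (by simp [hx])).1
    have hy2 := (hmem2 y (by simp [hy])).1
    by_contra hge
    push_neg at hge
    have hne : x ≠ y := by
      intro hxy
      exact (List.nodup_append'.mp hndAB).2.2 hx (hxy ▸ hy)
    have hyx : y < x := by omega
    obtain ⟨s, t, rfl⟩ := List.append_of_mem hx
    have hsub : [x, 1, y] <+ (s ++ x :: t) ++ 1 :: B := by
      have core : [x, 1, y] <+ x :: (t ++ 1 :: B) := by
        refine List.Sublist.cons₂ x ?_
        refine List.Sublist.trans ?_ (List.sublist_append_right t _)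
        exact List.Sublist.cons₂ 1 (List.singleton_sublist.mpr hy)
      have heq : (s ++ x :: t) ++ 1 :: B = s ++ (x :: (t ++ 1 :: B)) := by simp
      rw [heq]
      exact core.trans (List.sublist_append_right s _)
    exact hN ⟨1, y, x, by omega, hyx, hsub⟩
  obtain ⟨hA, hB⟩ := perm_split_lt hAB hlt
  have hidA : List.map (· + 1) (List.map (· - 1) A) = A := by
    rw [List.map_map]
    refine (List.map_congr_left ?_).trans (List.map_id _)
    intro x hx
    have := (hmem2 x (by simp [hx])).1
    simp only [Function.comp_apply, id_eq]
    omega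
  have hidB : List.map (· + (A.length + 1)) (List.map (· - (A.length + 1)) B) = B := by
    rw [List.map_map]
    refine (List.map_congr_left ?_).trans (List.map_id _)
    intro y hy
    have := (List.mem_range'_1.mp (hB.subset hy)).1
    simp only [Function.comp_apply, id_eq]
    omega
  refine ⟨A.length, B.length, List.map (· - 1) A, List.map (· - (A.length + 1)) B,
    ?_, ⟨?_, ?_⟩, ⟨?_, ?_⟩, ?_⟩
  · have := hp.length_eq
    simp [List.length_range'] at this
    omega
  · have e := map_sub_shift 1 1 A.length
    rw [show (1 + 1 : ℕ) = 2 from rfl] at e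
    exact e ▸ hA.map (· - 1)
  · rintro ⟨x, y, z, hxy, hyz, hsub⟩
    have hmap := hsub.map (· + 1)
    rw [hidA] at hmap
    exact hN ⟨x + 1, y + 1, z + 1, by omega, by omega,
      hmap.trans (List.sublist_append_left A _)⟩
  · have e := map_sub_shift (A.length + 1) 1 B.length
    rw [show (1 + (A.length + 1) : ℕ) = 2 + A.length by omega] at e
    exact e ▸ hB.map (· - (A.length + 1))
  · rintro ⟨x, y, z, hxy, hyz, hsub⟩
    have hmap := hsub.map (· + (A.length + 1))
    rw [hidB] at hmap
    refine hN ⟨x + (A.length + 1), y + (A.length + 1), z + (A.length + 1), by omega, by omega,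
      hmap.trans ?_⟩
    exact (List.sublist_cons_self 1 B).trans (List.sublist_append_right A _)
  · rw [hidA, hidB]
/-- Binary trees indexing both families. -/
inductive CT : Type
  | nil : CT
  | node : CT → CT → CT

namespace CT

def sz : CT → ℕ
  | .nil => 0
  | .node u w => sz u + 1 + sz w

def toA : CT → List ℕ
  | .nil => []
  | .node u w => toA u ++ 0 :: List.map (· + (ascList (toA u) + 1)) (toA w)

def toB : CT → List ℕ
  | .nil => []
  | .node u w => List.map (· + 1) (toB u) ++ 1 :: List.map (· + (sz u + 1)) (toB w)

lemma toA_nil_iff : ∀ t : CT, toA t = [] ↔ t = nil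
  | .nil => by simp [toA]
  | .node u w => by simp [toA]

lemma goodA_or : ∀ t : CT, toA t = [] ∨ goodA (toA t)
  | .nil => Or.inl rfl
  | .node u w => Or.inr (goodA_compose (goodA_or u) (goodA_or w))

lemma length_toA : ∀ t : CT, (toA t).length = sz t
  | .nil => rfl
  | .node u w => by
    simp only [toA, sz, List.length_append, List.length_cons, List.length_map,
      length_toA u, length_toA w]
    omega

lemma goodB_toB : ∀ t : CT, goodB (sz t) (toB t)
  | .nil => ⟨by simp [toB, sz], fun ⟨a, b, c, _, _, hsub⟩ => by
      have := hsub.length_le; simp [toB] at this⟩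
  | .node u w =>
    ⟨perm_B_compose (goodB_toB u).1 (goodB_toB w).1,
     N312_compose (goodB_toB u) (goodB_toB w)⟩

lemma length_toB (t : CT) : (toB t).length = sz t := by
  have := (goodB_toB t).1.length_eq
  simpa using this

lemma toB_nil_iff (t : CT) : toB t = [] ↔ t = nil := by
  constructor
  · intro h
    cases t with
    | nil => rfl
    | node u w => simp [toB] at h
  · rintro rfl; rfl

lemma ascA_eq_ascB : ∀ t : CT, ascList (toA t) = ascList (toB t)
  | .nil => rfl
  | .node u w => by
    have e_u := ascA_eq_ascB u
    have e_w := ascA_eq_ascB w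
    have h1 : ascList (toA (node u w)) =
        ascList (toA u) + ascList (toA w) + (if toA w = [] then 0 else 1) := by
      exact ascList_compose ((goodA_or w).imp id And.left)
    have h2 : ascList (toB (node u w)) =
        ascList (toB u) + ascList (toB w) + (if toB w = [] then 0 else 1) :=
      ascList_B_compose (goodB_toB w).1
    rw [h1, h2, e_u, e_w]
    by_cases hw0 : toA w = []
    · rw [if_pos hw0, if_pos ((toB_nil_iff w).mpr ((toA_nil_iff w).mp hw0))]
    · rw [if_neg hw0, if_neg (fun hh => hw0 ((toA_nil_iff w).mpr ((toB_nil_iff w).mp hh)))]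

lemma pivot_cancel {a : ℕ} : ∀ {u u' v v' : List ℕ}, a ∉ v → a ∉ v' →
    u ++ a :: v = u' ++ a :: v' → u = u' ∧ v = v'
  | [], [], v, v', _, _, h => by simpa using h
  | [], b' :: u', v, v', hv, hv', h => by
    simp only [List.nil_append, List.cons_append, List.cons.injEq] at h
    obtain ⟨rfl, h⟩ := h
    exact absurd (h ▸ List.mem_append_right u' List.mem_cons_self) hv
  | b :: u, [], v, v', hv, hv', h => by
    simp only [List.nil_append, List.cons_append, List.cons.injEq] at h
    obtain ⟨rfl, h⟩ := h
    exact absurd (h.symm ▸ List.mem_append_right u List.mem_cons_self) hv'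
  | b :: u, b' :: u', v, v', hv, hv', h => by
    simp only [List.cons_append, List.cons.injEq] at h
    obtain ⟨rfl, h⟩ := h
    obtain ⟨rfl, rfl⟩ := pivot_cancel hv hv' h
    exact ⟨rfl, rfl⟩

lemma toA_inj : ∀ t t' : CT, toA t = toA t' → t = t'
  | nil, nil, _ => rfl
  | nil, node u' w', h => absurd h.symm (by simp [toA])
  | node u w, nil, h => absurd h (by simp [toA])
  | node u w, node u' w', h => by
    simp only [toA] at h
    have h0 : (0 : ℕ) ∉ List.map (· + (ascList (toA w') + 1)) (toA w') := by
      intro hm; have := mem_map_add_ge hm; omega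
    obtain ⟨h1, h2⟩ := pivot_cancel
      (fun hm => by have := mem_map_add_ge hm; omega)
      (fun hm => by have := mem_map_add_ge hm; omega) h
    have hu : u = u' := toA_inj u u' h1
    subst hu
    have hw : toA w = toA w' :=
      List.map_injective_iff.mpr (add_left_injective _) h2
    rw [toA_inj w w' hw]

lemma toB_inj : ∀ t t' : CT, toB t = toB t' → t = t'
  | nil, nil, _ => rfl
  | nil, node u' w', h => absurd h.symm (by simp [toB])
  | node u w, nil, h => absurd h (by simp [toB])
  | node u w, node u' w', h => by
    simp only [toB] at h
    have key : ∀ (x : CT) (s : ℕ), (1 : ℕ) ∉ List.map (· + (s + 1)) (toB x) := by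
      intro x s hm
      obtain ⟨y, hy, heq⟩ := List.mem_map.mp hm
      have := (List.mem_range'_1.mp ((goodB_toB x).1.subset hy)).1
      omega
    obtain ⟨h1, h2⟩ := pivot_cancel (key w (sz u)) (key w' (sz u')) h
    have hu : u = u' := toB_inj u u'
      (List.map_injective_iff.mpr (add_left_injective _) h1)
    subst hu
    have hw : toB w = toB w' :=
      List.map_injective_iff.mpr (add_left_injective _) h2
    rw [toB_inj w w' hw]

lemma toA_surj_aux : ∀ n (l : List ℕ), l.length = n → (l = [] ∨ goodA l) →
    ∃ t, toA t = l := by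
  intro n
  induction n using Nat.strong_induction_on with
  | _ n ih =>
    rintro l rfl (rfl | ⟨hAS, hN⟩)
    · exact ⟨nil, rfl⟩
    · obtain ⟨u, w, hu, hw, rfl⟩ := A_split hAS hN
      obtain ⟨tu, rfl⟩ := ih u.length (by simp) u rfl hu
      obtain ⟨tw, rfl⟩ := ih w.length (by simp; omega) w rfl hw
      exact ⟨node tu tw, rfl⟩

lemma toB_surj_aux : ∀ n (l : List ℕ), l.Perm (List.range' 1 n) → N312 l →
    ∃ t, sz t = n ∧ toB t = l := by
  intro n
  induction n using Nat.strong_induction_on with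
  | _ n ih =>
    intro l hp hN
    rcases Nat.eq_zero_or_pos n with rfl | hn
    · have : l = [] := by simpa using hp
      exact ⟨nil, rfl, this ▸ rfl⟩
    · obtain ⟨a, b, α, β, hn', ⟨hαp, hαN⟩, ⟨hβp, hβN⟩, rfl⟩ := B_split hn hp hN
      obtain ⟨tα, hsa, rfl⟩ := ih a (by omega) α hαp hαN
      obtain ⟨tβ, hsb, rfl⟩ := ih b (by omega) β hβp hβN
      refine ⟨node tα tβ, by simp [sz]; omega, ?_⟩
      simp only [toB, hsa]

end CT
lemma contains101_iff (l : List ℕ) :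
    Contains101 l ↔ ∃ a b, a < b ∧ [b, a, b] <+ l := by
  constructor
  · rintro ⟨i, j, k, hij, hjk, hk, hlt, heq⟩
    have hj : j < l.length := lt_trans hjk hk
    have hi : i < l.length := lt_trans hij hj
    rw [List.getD_eq_getElem l 0 hi, List.getD_eq_getElem l 0 hj] at hlt
    rw [List.getD_eq_getElem l 0 hi, List.getD_eq_getElem l 0 hk] at heq
    have hsub : [l[i], l[j], l[k]] <+ l := by
      have hp : List.Pairwise (· < ·) [(⟨i, hi⟩ : Fin l.length), ⟨j, hj⟩, ⟨k, hk⟩] := by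
        refine List.Pairwise.cons ?_ (List.Pairwise.cons ?_ (List.pairwise_singleton _ _))
        · intro x hx
          rcases List.mem_cons.mp hx with rfl | hx
          · exact Fin.mk_lt_mk.mpr hij
          · rcases List.mem_singleton.mp hx with rfl
            exact Fin.mk_lt_mk.mpr (by omega)
        · intro x hx
          rcases List.mem_singleton.mp hx with rfl
          exact Fin.mk_lt_mk.mpr hjk
      simpa using List.map_getElem_sublist hp
    rw [← heq] at hsub
    exact ⟨l[j], l[i], hlt, hsub⟩
  · rintro ⟨a, b, hab, hsub⟩
    obtain ⟨is, heq, hpair⟩ := List.sublist_eq_map_getElem hsub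
    rcases is with _ | ⟨i, _ | ⟨j, _ | ⟨k, r⟩⟩⟩ <;> simp at heq
    obtain ⟨hb, ha, hb2, hr⟩ := heq
    subst hr
    have hij : i < j := (List.pairwise_cons.mp hpair).1 j (by simp)
    have hjk : j < k := (List.pairwise_cons.mp (List.pairwise_cons.mp hpair).2).1 k (by simp)
    refine ⟨i, j, k, ?_, ?_, k.isLt, ?_, ?_⟩
    · exact Fin.lt_def.mp hij
    · exact Fin.lt_def.mp hjk
    · rw [List.getD_eq_getElem l 0 j.isLt, List.getD_eq_getElem l 0 i.isLt, ← ha, ← hb]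
      exact hab
    · rw [List.getD_eq_getElem l 0 i.isLt, List.getD_eq_getElem l 0 k.isLt, ← hb, ← hb2]

lemma contains312_iff (l : List ℕ) :
    Contains312 l ↔ ∃ a b c, a < b ∧ b < c ∧ [c, a, b] <+ l := by
  constructor
  · rintro ⟨i, j, k, hij, hjk, hk, h1, h2⟩
    have hj : j < l.length := lt_trans hjk hk
    have hi : i < l.length := lt_trans hij hj
    rw [List.getD_eq_getElem l 0 hj, List.getD_eq_getElem l 0 hk] at h1
    rw [List.getD_eq_getElem l 0 hk, List.getD_eq_getElem l 0 hi] at h2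
    have hsub : [l[i], l[j], l[k]] <+ l := by
      have hp : List.Pairwise (· < ·) [(⟨i, hi⟩ : Fin l.length), ⟨j, hj⟩, ⟨k, hk⟩] := by
        refine List.Pairwise.cons ?_ (List.Pairwise.cons ?_ (List.pairwise_singleton _ _))
        · intro x hx
          rcases List.mem_cons.mp hx with rfl | hx
          · exact Fin.mk_lt_mk.mpr hij
          · rcases List.mem_singleton.mp hx with rfl
            exact Fin.mk_lt_mk.mpr (by omega)
        · intro x hx
          rcases List.mem_singleton.mp hx with rfl
          exact Fin.mk_lt_mk.mpr hjk
      simpa using List.map_getElem_sublist hp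
    exact ⟨l[j], l[k], l[i], h1, h2, hsub⟩
  · rintro ⟨a, b, c, hab, hbc, hsub⟩
    obtain ⟨is, heq, hpair⟩ := List.sublist_eq_map_getElem hsub
    rcases is with _ | ⟨i, _ | ⟨j, _ | ⟨k, r⟩⟩⟩ <;> simp at heq
    obtain ⟨hc, ha, hb, hr⟩ := heq
    subst hr
    have hij : i < j := (List.pairwise_cons.mp hpair).1 j (by simp)
    have hjk : j < k := (List.pairwise_cons.mp (List.pairwise_cons.mp hpair).2).1 k (by simp)
    refine ⟨i, j, k, ?_, ?_, k.isLt, ?_, ?_⟩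
    · exact Fin.lt_def.mp hij
    · exact Fin.lt_def.mp hjk
    · rw [List.getD_eq_getElem l 0 j.isLt, List.getD_eq_getElem l 0 k.isLt, ← ha, ← hb]
      exact hab
    · rw [List.getD_eq_getElem l 0 k.isLt, List.getD_eq_getElem l 0 i.isLt, ← hb, ← hc]
      exact hbc

lemma AS_isAscSeq {l : List ℕ} (h : AS l) : IsAscSeq l := by
  induction h with
  | base =>
    refine ⟨by simp, rfl, ?_⟩
    intro i h1 h2
    simp at h2
    omega
  | snoc l z hl hz ih =>
    obtain ⟨hne, h0, hb⟩ := ih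
    have hlpos : 0 < l.length := List.length_pos_iff.mpr hne
    refine ⟨by simp, ?_, ?_⟩
    · rw [List.getD_append _ _ _ _ hlpos]
      exact h0
    · intro i hi0 hilen
      simp only [List.length_append, List.length_singleton] at hilen
      rcases Nat.lt_or_ge i l.length with hil | hil
      · rw [List.getD_append _ _ _ _ hil, List.take_append_of_le_length (le_of_lt hil)]
        exact hb i hi0 hil
      · have hieq : i = l.length := by omega
        subst hieq
        have hgd : (l ++ [z]).getD l.length 0 = z := by
          rw [List.getD_eq_getElem _ 0 (by simp), List.getElem_append_right (le_refl _)]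
          simp
        rw [hgd, List.take_left]
        exact hz

lemma isAscSeq_AS {l : List ℕ} (h : IsAscSeq l) : AS l := by
  induction l using List.reverseRecOn with
  | nil => exact absurd rfl h.1
  | append_singleton l z ih =>
    obtain ⟨-, h0, hb⟩ := h
    rcases eq_or_ne l [] with rfl | hne
    · simp at h0
      subst h0
      exact AS.base
    · have hlpos : 0 < l.length := List.length_pos_iff.mpr hne
      have hAS : AS l := by
        refine ih ⟨hne, ?_, ?_⟩
        · rw [List.getD_append _ _ _ _ hlpos] at h0
          exact h0
        · intro i hi0 hilen
          have hb' := hb i hi0 (by simp; omega)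
          rwa [List.getD_append _ _ _ _ hilen,
            List.take_append_of_le_length (le_of_lt hilen)] at hb'
      refine AS.snoc l z hAS ?_
      have hb' := hb l.length hlpos (by simp)
      have hgd : (l ++ [z]).getD l.length 0 = z := by
        rw [List.getD_eq_getElem _ 0 (by simp), List.getElem_append_right (le_refl _)]
        simp
      rwa [hgd, List.take_left] at hb'

def PA (m : ℕ) (l : List ℕ) : Prop := l.length = m ∧ (l = [] ∨ goodA l)

noncomputable def eqA (m : ℕ) : {t : CT // CT.sz t = m} ≃ {l : List ℕ // PA m l} :=
  Equiv.ofBijective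
    (fun t => ⟨CT.toA t.1, by rw [CT.length_toA]; exact t.2, CT.goodA_or t.1⟩)
    ⟨fun t t' h => Subtype.ext (CT.toA_inj _ _ (congrArg Subtype.val h)),
     fun y => by
       obtain ⟨l, hlen, hgood⟩ := y
       obtain ⟨t, rfl⟩ := CT.toA_surj_aux l.length l rfl hgood
       exact ⟨⟨t, by rw [← CT.length_toA t]; exact hlen⟩, Subtype.ext rfl⟩⟩

noncomputable def eqB (m : ℕ) : {t : CT // CT.sz t = m} ≃ {w : List ℕ // goodB m w} :=
  Equiv.ofBijective
    (fun t => ⟨CT.toB t.1, by obtain ⟨t, rfl⟩ := t; exact CT.goodB_toB t⟩)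
    ⟨fun t t' h => Subtype.ext (CT.toB_inj _ _ (congrArg Subtype.val h)),
     fun y => by
       obtain ⟨w, hw⟩ := y
       obtain ⟨t, hsz, rfl⟩ := CT.toB_surj_aux m w hw.1 hw.2
       exact ⟨⟨t, hsz⟩, Subtype.ext rfl⟩⟩

/-- There is an ascent-preserving bijection between 101-avoiding ascent sequences of
length `n` and 312-avoiding permutations of `{1,…,n}` (written as words). -/
theorem stmt13 (n : ℕ) (hn : 1 ≤ n) :
    ∃ f : {l : List ℕ // l.length = n ∧ IsAscSeq l ∧ ¬ Contains101 l} ≃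
          {w : List ℕ // w.Perm (List.range' 1 n) ∧ ¬ Contains312 w},
      ∀ x, ascList ((f x) : List ℕ) = ascList (x : List ℕ) := by
  have hP : ∀ l : List ℕ, (l.length = n ∧ IsAscSeq l ∧ ¬ Contains101 l) ↔ PA n l := by
    intro l
    constructor
    · rintro ⟨hlen, hseq, hc⟩
      exact ⟨hlen, Or.inr ⟨isAscSeq_AS hseq, fun ⟨a, b, hab, hsub⟩ =>
        hc ((contains101_iff l).mpr ⟨a, b, hab, hsub⟩)⟩⟩
    · rintro ⟨hlen, rfl | ⟨hAS, hN⟩⟩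
      · simp at hlen; omega
      · exact ⟨hlen, AS_isAscSeq hAS, fun hc => hN ((contains101_iff l).mp hc)⟩
  have hQ : ∀ w : List ℕ, goodB n w ↔ (w.Perm (List.range' 1 n) ∧ ¬ Contains312 w) := by
    intro w
    constructor
    · rintro ⟨hp, hN⟩
      exact ⟨hp, fun hc => hN ((contains312_iff w).mp hc)⟩
    · rintro ⟨hp, hc⟩
      exact ⟨hp, fun ⟨a, b, c, hab, hbc, hsub⟩ =>
        hc ((contains312_iff w).mpr ⟨a, b, c, hab, hbc, hsub⟩)⟩
  refine ⟨(Equiv.subtypeEquivRight hP).trans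
    ((eqA n).symm.trans ((eqB n).trans (Equiv.subtypeEquivRight hQ))), ?_⟩
  intro x
  simp only [Equiv.trans_apply]
  set y := (eqA n).symm ((Equiv.subtypeEquivRight hP) x) with hy
  have h1 : (((Equiv.subtypeEquivRight hQ) ((eqB n) y)) : List ℕ) = CT.toB y.1 := rfl
  have h2 : CT.toA y.1 = (((Equiv.subtypeEquivRight hP) x) : List ℕ) :=
    congrArg Subtype.val ((eqA n).apply_symm_apply ((Equiv.subtypeEquivRight hP) x))
  have h3 : (((Equiv.subtypeEquivRight hP) x) : List ℕ) = (x : List ℕ) := rfl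
  rw [h1, ← CT.ascA_eq_ascB, h2, h3]
end

section
/- The ascent sequences avoiding 0101 are restricted growth functions, and they encode precisely the non-crossing set partitions: an RGF encodes a non-crossing partition if and only if it avoids 0101. -/
/-- A restricted growth function: starts with 0, and every occurrence of a letter `k+1`
is preceded by an occurrence of `k`. -/
def IsRGF (l : List ℕ) : Prop :=
  l.getD 0 0 = 0 ∧
    ∀ i < l.length, ∀ k, l.getD i 0 = k + 1 → ∃ j < i, l.getD j 0 = k

/-- A sequence contains the pattern 0101. -/
def Contains0101 (l : List ℕ) : Prop :=
  ∃ i j k m, i < j ∧ j < k ∧ k < m ∧ m < l.length ∧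
    l.getD i 0 = l.getD k 0 ∧ l.getD j 0 = l.getD m 0 ∧ l.getD i 0 < l.getD j 0

/-- The partition encoded by an RGF (blocks are the fibers of the letters) is
non-crossing: there are no positions `a < b < c < d` with `a, c` in one block and
`b, d` in a different block. -/
def EncodesNoncrossing (l : List ℕ) : Prop :=
  ¬ ∃ a b c d, a < b ∧ b < c ∧ c < d ∧ d < l.length ∧
      l.getD a 0 = l.getD c 0 ∧ l.getD b 0 = l.getD d 0 ∧ l.getD a 0 ≠ l.getD b 0

/-- `ascList` counts the positions `a < l.length - 1` with `l a < l (a+1)`. -/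
lemma ascList_eq : ∀ l : List ℕ,
    ascList l = (List.range (l.length - 1)).countP (fun a => decide (l.getD a 0 < l.getD (a+1) 0))
  | [] => rfl
  | [_] => rfl
  | x :: y :: ys => by
      have ih := ascList_eq (y :: ys)
      simp only [ascList, List.zip_cons_cons, List.tail_cons, List.countP_cons] at ih ⊢
      simp only [List.length_cons, Nat.add_sub_cancel, List.range_succ_eq_map,
        List.countP_cons, List.countP_map] at ih ⊢
      simp only [Function.comp_def, Nat.succ_eq_add_one, List.getD_cons_succ,
        List.getD_cons_zero] at ih ⊢
      omega

lemma countP_range_eq_card (n : ℕ) (p : ℕ → Bool) :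
    (List.range n).countP p = ((Finset.range n).filter (fun a => p a)).card := by
  have h1 : ((Finset.range n).filter (fun a => p a)).card
      = Multiset.card ((Multiset.range n).filter fun a => p a) := rfl
  have h2 : (Multiset.range n) = (List.range n : Multiset ℕ) := rfl
  rw [h1, h2, Multiset.filter_coe, Multiset.coe_card, List.countP_eq_length_filter]
  simp

lemma getD_take (l : List ℕ) (i a : ℕ) (h : a < i) : (l.take i).getD a 0 = l.getD a 0 := by
  simp [List.getD_eq_getElem?_getD, List.getElem?_take, h]

/-- Chain lemma: if the RGF condition holds for all positions `< n`, then any value smaller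
than the letter at a position `q < n` occurs before `q`. -/
lemma rgf_chain (l : List ℕ) (n : ℕ)
    (h : ∀ i < n, ∀ k, l.getD i 0 = k + 1 → ∃ j < i, l.getD j 0 = k) :
    ∀ v, ∀ q, q < n → l.getD q 0 = v → ∀ w, w < v → ∃ e < q, l.getD e 0 = w := by
  intro v
  induction v with
  | zero => intro q _ _ w hw; omega
  | succ v ih =>
      intro q hq hval w hw
      obtain ⟨j, hj, hjv⟩ := h q hq v hval
      rcases Nat.lt_succ_iff_lt_or_eq.mp hw with hw' | rfl
      · obtain ⟨e, he, hev⟩ := ih j (hj.trans hq) hjv w hw'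
        exact ⟨e, he.trans hj, hev⟩
      · exact ⟨j, hj, hjv⟩

/-- Ascent sequences avoiding 0101 are RGFs, and an RGF encodes a non-crossing set
partition if and only if it avoids 0101. -/
theorem stmt14 :
    (∀ l : List ℕ, IsAscSeq l → ¬ Contains0101 l → IsRGF l) ∧
    (∀ l : List ℕ, IsRGF l → (¬ Contains0101 l ↔ EncodesNoncrossing l)) := by
  constructor
  · -- Part 1: 0101-avoiding ascent sequences are RGFs
    rintro l ⟨hne, h0, hasc⟩ hav
    refine ⟨h0, ?_⟩
    intro i
    induction i using Nat.strong_induction_on with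
    | _ i IH =>
      intro hi k hk
      -- i ≠ 0
      have hi0 : 0 < i := by
        rcases Nat.eq_zero_or_pos i with rfl | h
        · rw [h0] at hk; omega
        · exact h
      -- RGF condition holds for positions < i
      have hpre : ∀ i' < i, ∀ k', l.getD i' 0 = k' + 1 → ∃ j < i', l.getD j 0 = k' :=
        fun i' hi' => IH i' hi' (hi'.trans hi)
      -- if k = 0 we can use position 0
      rcases Nat.eq_zero_or_pos k with rfl | hkpos
      · exact ⟨0, hi0, h0⟩
      -- suppose no j < i has value k
      by_contra hex
      push_neg at hex
      -- every letter before i is < k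
      have hlt : ∀ j < i, l.getD j 0 < k := by
        intro j hj
        by_contra hge
        push_neg at hge
        rcases Nat.lt_or_ge k (l.getD j 0) with h' | h'
        · obtain ⟨e, he, hev⟩ :=
            rgf_chain l i hpre (l.getD j 0) j hj rfl k h'
          exact hex e (he.trans hj) hev
        · exact hex j hj (le_antisymm h' hge)
      -- the number of ascents in the prefix is at least k
      have hbound := hasc i hi0 hi
      rw [hk] at hbound
      have hascge : k ≤ ascList (l.take i) := by omega
      -- express ascList as a Finset card
      have hlen : (l.take i).length = i := by
        rw [List.length_take]; omega
      have hkey : ascList (l.take i)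
          = ((Finset.range (i-1)).filter
              (fun a => decide (l.getD a 0 < l.getD (a+1) 0))).card := by
        rw [ascList_eq, hlen, countP_range_eq_card]
        congr 1
        apply Finset.filter_congr
        intro a ha
        have ha' : a < i - 1 := Finset.mem_range.mp ha
        rw [getD_take l i a (by omega), getD_take l i (a+1) (by omega)]
      set S : Finset ℕ :=
        (Finset.range (i-1)).filter (fun a => decide (l.getD a 0 < l.getD (a+1) 0)) with hS
      have hcard : k ≤ S.card := by rw [← hkey]; exact hascge
      -- the tops of ascents lie in Ico 1 k; pigeonhole
      have hmaps : ∀ a ∈ S, l.getD (a+1) 0 ∈ Finset.Ico 1 k := by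
        intro a ha
        rw [hS, Finset.mem_filter, Finset.mem_range] at ha
        obtain ⟨ha1, ha2⟩ := ha
        simp only [decide_eq_true_eq] at ha2
        refine Finset.mem_Ico.mpr ⟨by omega, hlt (a+1) (by omega)⟩
      have hltcard : (Finset.Ico 1 k).card < S.card := by
        rw [Nat.card_Ico]; omega
      obtain ⟨a, haS, b, hbS, hab, htop⟩ :=
        Finset.exists_ne_map_eq_of_card_lt_of_maps_to hltcard hmaps
      -- WLOG a < b
      wlog hlt' : a < b generalizing a b
      · exact this b hbS a haS hab.symm htop.symm (by omega)
      -- unpack membership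
      rw [hS, Finset.mem_filter, Finset.mem_range] at haS hbS
      obtain ⟨ha1, ha2⟩ := haS
      obtain ⟨hb1, hb2⟩ := hbS
      simp only [decide_eq_true_eq] at ha2 hb2
      -- a + 1 < b
      have hab1 : a + 1 < b := by
        rcases Nat.lt_or_ge (a+1) b with h' | h'
        · exact h'
        · exfalso; have hba : b = a + 1 := by omega
          rw [hba] at hb2; rw [hba] at htop; omega
      -- find an occurrence of l b before a+1
      obtain ⟨e, he, hev⟩ :=
        rgf_chain l i hpre (l.getD (a+1) 0) (a+1) (by omega) rfl (l.getD b 0)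
          (by rw [htop]; exact hb2)
      -- build the 0101 pattern
      exact hav ⟨e, a+1, b, b+1, he, hab1, Nat.lt_succ_self b,
        by omega, by rw [hev], by rw [htop], by rw [hev, htop]; exact hb2⟩
  · -- Part 2: for RGFs, avoidance of 0101 ↔ non-crossing
    rintro l ⟨h0, hrgf⟩
    constructor
    · -- ¬ contains → noncrossing
      intro hav
      rintro ⟨a, b, c, d, hab, hbc, hcd, hd, hac, hbd, hne⟩
      rcases Nat.lt_or_ge (l.getD a 0) (l.getD b 0) with h' | h'
      · exact hav ⟨a, b, c, d, hab, hbc, hcd, hd, hac, hbd, h'⟩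
      · have hba : l.getD b 0 < l.getD a 0 := by
          rcases lt_or_eq_of_le h' with h'' | h''
          · exact h''
          · exact absurd h''.symm hne
        have ha' : a < l.length := by omega
        obtain ⟨e, he, hev⟩ :=
          rgf_chain l l.length hrgf (l.getD a 0) a ha' rfl (l.getD b 0) hba
        exact hav ⟨e, a, b, c, he, hab, hbc, by omega,
          by rw [hev], hac, by rw [hev]; exact hba⟩
    · -- noncrossing → ¬ contains
      intro hnc
      rintro ⟨i, j, k, m, hij, hjk, hkm, hm, hik, hjm, hlt⟩
      exact hnc ⟨i, j, k, m, hij, hjk, hkm, hm, hik, hjm, ne_of_lt hlt⟩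
end

section
/- There is an ascent-preserving bijection between the set of restricted ascent sequences of length n and the set of ascent sequences of length n avoiding the pattern 021; consequently the number of ascent sequences of length n avoiding 021 equals the n-th Catalan number. -/
/-- A sequence contains the pattern 021. -/
def Contains021 (l : List ℕ) : Prop :=
  ∃ i j k, i < j ∧ j < k ∧ k < l.length ∧
    l.getD i 0 < l.getD k 0 ∧ l.getD k 0 < l.getD j 0

/-- A restricted ascent sequence: an ascent sequence in which each letter is at least
one less than the maximum of the preceding letters
(stated subtraction-free as `x_j ≤ x_i + 1` for all `j < i`). -/
def IsRestrictedAscSeq (l : List ℕ) : Prop :=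
  IsAscSeq l ∧ ∀ i, 0 < i → i < l.length → ∀ j < i, l.getD j 0 ≤ l.getD i 0 + 1

namespace Stmt19

def maxL (l : List ℕ) : ℕ := l.foldr max 0

def lastL (l : List ℕ) : ℕ := l.getD (l.length - 1) 0

@[simp] lemma maxL_nil : maxL [] = 0 := rfl
@[simp] lemma maxL_cons (a : ℕ) (l : List ℕ) : maxL (a :: l) = max a (maxL l) := rfl

lemma foldr_max_eq (l : List ℕ) (b : ℕ) : l.foldr max b = max (l.foldr max 0) b := by
  induction l with
  | nil => simp
  | cons a t ih => simp [List.foldr, ih]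

@[simp] lemma maxL_snoc (l : List ℕ) (y : ℕ) : maxL (l ++ [y]) = max (maxL l) y := by
  unfold maxL
  rw [List.foldr_append, foldr_max_eq]
  simp

lemma maxL_le_iff {l : List ℕ} {c : ℕ} : maxL l ≤ c ↔ ∀ x ∈ l, x ≤ c := by
  induction l with
  | nil => simp
  | cons a t ih => simp [ih]

lemma getD_mem {l : List ℕ} {i : ℕ} (h : i < l.length) : l.getD i 0 ∈ l := by
  rw [List.getD_eq_getElem l 0 h]
  exact List.getElem_mem _

lemma le_maxL {l : List ℕ} {i : ℕ} (h : i < l.length) : l.getD i 0 ≤ maxL l := by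
  have := maxL_le_iff (l := l) (c := maxL l)
  exact this.mpr (fun x hx => (maxL_le_iff (c := maxL l)).mp (le_refl _) x hx) |> fun _ =>
    (maxL_le_iff (c := maxL l)).mp (le_refl _) _ (getD_mem h)

@[simp] lemma lastL_snoc (l : List ℕ) (y : ℕ) : lastL (l ++ [y]) = y := by
  unfold lastL
  rw [List.length_append]
  simp only [List.length_singleton, Nat.add_sub_cancel]
  rw [List.getD_append_right l [y] 0 l.length (le_refl _)]
  simp

lemma lastL_le_maxL (l : List ℕ) : lastL l ≤ maxL l := by
  rcases eq_or_ne l [] with rfl | h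
  · simp [lastL]
  · exact le_maxL (by
      have : 0 < l.length := List.length_pos_iff.mpr h
      omega)

@[simp] lemma ascList_nil : ascList [] = 0 := rfl
@[simp] lemma ascList_singleton (a : ℕ) : ascList [a] = 0 := rfl

lemma ascList_cons_cons (a b : ℕ) (t : List ℕ) :
    ascList (a :: b :: t) = ascList (b :: t) + (if a < b then 1 else 0) := by
  simp [ascList, List.countP_cons]

lemma lastL_cons_cons (a b : ℕ) (t : List ℕ) : lastL (a :: b :: t) = lastL (b :: t) := by
  unfold lastL
  simp only [List.length_cons]
  rw [show b :: t = (b :: t) from rfl]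
  have : (t.length + 1 + 1) - 1 = (t.length + 1 - 1) + 1 := by omega
  rw [this, List.getD_cons_succ]

lemma ascList_snoc {l : List ℕ} (h : l ≠ []) (y : ℕ) :
    ascList (l ++ [y]) = ascList l + (if lastL l < y then 1 else 0) := by
  induction l with
  | nil => simp at h
  | cons a t ih =>
    cases t with
    | nil => simp [List.cons_append, ascList_cons_cons, lastL]
    | cons b t' =>
      have e1 : (a :: b :: t') ++ [y] = a :: b :: (t' ++ [y]) := by simp
      have e2 : (b :: t') ++ [y] = b :: (t' ++ [y]) := by simp
      rw [e1, ascList_cons_cons, ← e2, ih (by simp), ascList_cons_cons, lastL_cons_cons]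
      omega


lemma getD_snoc_lt {l : List ℕ} {i : ℕ} (h : i < l.length) (y : ℕ) :
    (l ++ [y]).getD i 0 = l.getD i 0 := List.getD_append _ _ _ _ h

lemma getD_snoc_len (l : List ℕ) (y : ℕ) : (l ++ [y]).getD l.length 0 = y := by
  rw [List.getD_append_right l [y] 0 l.length (le_refl _)]
  simp

lemma isAscSeq_singleton {x : ℕ} : IsAscSeq [x] ↔ x = 0 := by
  constructor
  · rintro ⟨-, h, -⟩; simpa using h
  · rintro rfl
    refine ⟨by simp, rfl, ?_⟩
    intro i h1 h2
    simp at h2; omega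

lemma isAscSeq_snoc {l : List ℕ} (h : l ≠ []) (y : ℕ) :
    IsAscSeq (l ++ [y]) ↔ IsAscSeq l ∧ y ≤ ascList l + 1 := by
  have hlen : 0 < l.length := List.length_pos_iff.mpr h
  have htake : ∀ i, i ≤ l.length → (l ++ [y]).take i = l.take i :=
    fun i hi => List.take_append_of_le_length hi
  constructor
  · rintro ⟨-, h0, hb⟩
    rw [getD_snoc_lt hlen] at h0
    refine ⟨⟨h, h0, ?_⟩, ?_⟩
    · intro i h1 h2
      have := hb i h1 (by simp; omega)
      rwa [getD_snoc_lt (by omega), htake i (by omega)] at this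
    · have := hb l.length hlen (by simp)
      rwa [getD_snoc_len, htake _ (le_refl _), List.take_length] at this
  · rintro ⟨⟨-, h0, hb⟩, hy⟩
    refine ⟨by simp, by rw [getD_snoc_lt hlen]; exact h0, ?_⟩
    intro i h1 h2
    simp only [List.length_append, List.length_singleton] at h2
    rcases lt_or_ge i l.length with hi | hi
    · rw [getD_snoc_lt hi, htake i (by omega)]
      exact hb i h1 hi
    · have : i = l.length := by omega
      subst this
      rwa [getD_snoc_len, htake _ (le_refl _), List.take_length]

def NoBad (l : List ℕ) : Prop :=
  ∀ j k, j < k → k < l.length → l.getD k 0 = 0 ∨ l.getD j 0 ≤ l.getD k 0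

lemma not_contains_iff_noBad {l : List ℕ} (h0 : l.getD 0 0 = 0) :
    ¬ Contains021 l ↔ NoBad l := by
  constructor
  · intro hc j k hjk hk
    by_contra hbad
    push_neg at hbad
    obtain ⟨hk0, hjv⟩ := hbad
    have hj0 : 0 < j := by
      rcases Nat.eq_zero_or_pos j with rfl | h
      · omega
      · exact h
    exact hc ⟨0, j, k, hj0, hjk, hk, by omega, by omega⟩
  · rintro hnb ⟨i, j, k, hij, hjk, hk, h1, h2⟩
    rcases hnb j k hjk hk with h | h <;> omega

lemma noBad_snoc {l : List ℕ} (y : ℕ) :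
    NoBad (l ++ [y]) ↔ NoBad l ∧ (y = 0 ∨ maxL l ≤ y) := by
  constructor
  · intro hnb
    constructor
    · intro j k hjk hk
      have := hnb j k hjk (by simp; omega)
      rwa [getD_snoc_lt hk, getD_snoc_lt (by omega)] at this
    · by_cases hy : y = 0
      · exact Or.inl hy
      · refine Or.inr (maxL_le_iff.mpr ?_)
        intro x hx
        obtain ⟨j, hj, hxe⟩ := List.getElem_of_mem hx
        have := hnb j l.length hj (by simp)
        rw [getD_snoc_len, getD_snoc_lt hj] at this
        rcases this with h | h
        · omega
        · rw [List.getD_eq_getElem l 0 hj, hxe] at h; exact h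
  · rintro ⟨hnb, hy⟩ j k hjk hk
    simp only [List.length_append, List.length_singleton] at hk
    rcases lt_or_ge k l.length with hkl | hkl
    · rw [getD_snoc_lt hkl, getD_snoc_lt (by omega)]
      exact hnb j k hjk hkl
    · have : k = l.length := by omega
      subst this
      rw [getD_snoc_len, getD_snoc_lt (by omega)]
      rcases hy with rfl | hy
      · exact Or.inl rfl
      · exact Or.inr ((le_maxL (by omega)).trans hy)

def Restr2 (l : List ℕ) : Prop :=
  ∀ i, 0 < i → i < l.length → ∀ j < i, l.getD j 0 ≤ l.getD i 0 + 1

lemma restr2_snoc {l : List ℕ} (hl : l ≠ []) (y : ℕ) :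
    Restr2 (l ++ [y]) ↔ Restr2 l ∧ maxL l ≤ y + 1 := by
  have hlen : 0 < l.length := List.length_pos_iff.mpr hl
  constructor
  · intro hr
    constructor
    · intro i h1 h2 j hj
      have := hr i h1 (by simp; omega) j hj
      rwa [getD_snoc_lt h2, getD_snoc_lt (by omega)] at this
    · refine maxL_le_iff.mpr ?_
      intro x hx
      obtain ⟨j, hj, hxe⟩ := List.getElem_of_mem hx
      have := hr l.length hlen (by simp) j hj
      rw [getD_snoc_len, getD_snoc_lt hj, List.getD_eq_getElem l 0 hj, hxe] at this
      exact this
  · rintro ⟨hr, hy⟩ i h1 h2 j hj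
    simp only [List.length_append, List.length_singleton] at h2
    rcases lt_or_ge i l.length with hil | hil
    · rw [getD_snoc_lt hil, getD_snoc_lt (by omega)]
      exact hr i h1 hil j hj
    · have : i = l.length := by omega
      subst this
      rw [getD_snoc_len, getD_snoc_lt (by omega)]
      exact (le_maxL (by omega)).trans hy


def GA (l : List ℕ) : Prop := IsAscSeq l ∧ ¬ Contains021 l
def GR (l : List ℕ) : Prop := IsRestrictedAscSeq l

lemma not_contains_singleton (x : ℕ) : ¬ Contains021 [x] := by
  rintro ⟨i, j, k, hij, hjk, hk, -, -⟩
  simp at hk; omega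

lemma ga_singleton {x : ℕ} : GA [x] ↔ x = 0 := by
  constructor
  · intro h; exact isAscSeq_singleton.mp h.1
  · rintro rfl; exact ⟨isAscSeq_singleton.mpr rfl, not_contains_singleton 0⟩

lemma gr_singleton {x : ℕ} : GR [x] ↔ x = 0 := by
  constructor
  · intro h; exact isAscSeq_singleton.mp h.1
  · rintro rfl
    refine ⟨isAscSeq_singleton.mpr rfl, ?_⟩
    intro i h1 h2; simp at h2; omega

lemma ga_snoc {l : List ℕ} (h : l ≠ []) (y : ℕ) :
    GA (l ++ [y]) ↔ GA l ∧ y ≤ ascList l + 1 ∧ (y = 0 ∨ maxL l ≤ y) := by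
  have hlen : 0 < l.length := List.length_pos_iff.mpr h
  constructor
  · rintro ⟨hA, hC⟩
    obtain ⟨hAl, hy⟩ := (isAscSeq_snoc h y).mp hA
    have h0app : (l ++ [y]).getD 0 0 = 0 := hA.2.1
    have hnb := (not_contains_iff_noBad h0app).mp hC
    obtain ⟨hnbl, hor⟩ := (noBad_snoc y).mp hnb
    exact ⟨⟨hAl, (not_contains_iff_noBad hAl.2.1).mpr hnbl⟩, hy, hor⟩
  · rintro ⟨⟨hAl, hCl⟩, hy, hor⟩
    have hA := (isAscSeq_snoc h y).mpr ⟨hAl, hy⟩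
    refine ⟨hA, ?_⟩
    rw [not_contains_iff_noBad hA.2.1, noBad_snoc]
    exact ⟨(not_contains_iff_noBad hAl.2.1).mp hCl, hor⟩

lemma gr_snoc {l : List ℕ} (h : l ≠ []) (y : ℕ) :
    GR (l ++ [y]) ↔ GR l ∧ y ≤ ascList l + 1 ∧ maxL l ≤ y + 1 := by
  constructor
  · rintro ⟨hA, hR⟩
    obtain ⟨hAl, hy⟩ := (isAscSeq_snoc h y).mp hA
    obtain ⟨hRl, hm⟩ := (restr2_snoc h y).mp hR
    exact ⟨⟨hAl, hRl⟩, hy, hm⟩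
  · rintro ⟨⟨hAl, hRl⟩, hy, hm⟩
    exact ⟨(isAscSeq_snoc h y).mpr ⟨hAl, hy⟩, (restr2_snoc h y).mpr ⟨hRl, hm⟩⟩

lemma ga_inv : ∀ l : List ℕ, GA l → maxL l ≤ ascList l ∧ (lastL l = 0 ∨ lastL l = maxL l) := by
  intro l
  induction l using List.reverseRecOn with
  | nil => intro h; exact absurd rfl h.1.1
  | append_singleton xs y ih =>
    rcases eq_or_ne xs [] with rfl | hxs
    · intro h
      have : y = 0 := ga_singleton.mp h
      subst this
      simp [lastL]
    · intro h
      obtain ⟨hga, hy, hor⟩ := (ga_snoc hxs y).mp h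
      obtain ⟨hma, _⟩ := ih hga
      have hlm := lastL_le_maxL xs
      rw [maxL_snoc, ascList_snoc hxs, lastL_snoc]
      constructor
      · split_ifs with hty
        · exact max_le (by omega) (by omega)
        · exact max_le (by omega) (by omega)
      · rcases hor with rfl | hy2
        · exact Or.inl rfl
        · exact Or.inr (max_eq_right hy2).symm

lemma gr_inv : ∀ l : List ℕ, GR l → maxL l ≤ ascList l ∧ maxL l ≤ lastL l + 1 := by
  intro l
  induction l using List.reverseRecOn with
  | nil => intro h; exact absurd rfl h.1.1
  | append_singleton xs y ih =>
    rcases eq_or_ne xs [] with rfl | hxs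
    · intro h
      have : y = 0 := gr_singleton.mp h
      subst this
      simp [lastL]
    · intro h
      obtain ⟨hga, hy, hm⟩ := (gr_snoc hxs y).mp h
      obtain ⟨hma, _⟩ := ih hga
      have hlm := lastL_le_maxL xs
      rw [maxL_snoc, ascList_snoc hxs, lastL_snoc]
      constructor
      · split_ifs with hty
        · exact max_le (by omega) (by omega)
        · exact max_le (by omega) (by omega)
      · exact max_le (by omega) (by omega)

lemma ga_ne_nil {l : List ℕ} (h : GA l) : l ≠ [] := h.1.1
lemma gr_ne_nil {l : List ℕ} (h : GR l) : l ≠ [] := h.1.1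

lemma ga_of_append : ∀ (r l : List ℕ), l ≠ [] → GA (l ++ r) → GA l := by
  intro r
  induction r using List.reverseRecOn with
  | nil => intro l h hg; simpa using hg
  | append_singleton r' y ih =>
    intro l h hg
    rw [← List.append_assoc] at hg
    have : GA (l ++ r') := ((ga_snoc (by simp [h]) y).mp hg).1
    exact ih l h this


def toA : ℕ → List ℕ → List ℕ
  | _, [] => []
  | m, x :: xs => (if x < m then 0 else x) :: toA (max m x) xs

def toR : ℕ → List ℕ → List ℕ
  | _, [] => []
  | m, x :: xs => (if x < m then m - 1 else x) :: toR (max m x) xs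

@[simp] lemma toA_nil (m : ℕ) : toA m [] = [] := rfl
@[simp] lemma toR_nil (m : ℕ) : toR m [] = [] := rfl

lemma length_toA : ∀ (l : List ℕ) (m : ℕ), (toA m l).length = l.length
  | [], _ => rfl
  | x :: xs, m => by simp [toA, length_toA xs]

lemma length_toR : ∀ (l : List ℕ) (m : ℕ), (toR m l).length = l.length
  | [], _ => rfl
  | x :: xs, m => by simp [toR, length_toR xs]

lemma toA_snoc : ∀ (xs : List ℕ) (m y : ℕ),
    toA m (xs ++ [y]) = toA m xs ++ [if y < max m (maxL xs) then 0 else y]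
  | [], m, y => by simp [toA]
  | x :: xs, m, y => by
    rw [List.cons_append, toA, toA, toA_snoc xs (max m x) y, maxL_cons, ← max_assoc]
    simp

lemma toR_snoc : ∀ (xs : List ℕ) (m y : ℕ),
    toR m (xs ++ [y]) = toR m xs ++ [if y < max m (maxL xs) then max m (maxL xs) - 1 else y]
  | [], m, y => by simp [toR]
  | x :: xs, m, y => by
    rw [List.cons_append, toR, toR, toR_snoc xs (max m x) y, maxL_cons, ← max_assoc]
    simp

lemma main_toA : ∀ l : List ℕ, GR l →
    GA (toA 0 l) ∧ ascList (toA 0 l) = ascList l ∧ maxL (toA 0 l) = maxL l ∧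
      lastL (toA 0 l) = (if lastL l < maxL l then 0 else lastL l) ∧ toR 0 (toA 0 l) = l := by
  intro l
  induction l using List.reverseRecOn with
  | nil => intro h; exact absurd rfl h.1.1
  | append_singleton xs y ih =>
    rcases eq_or_ne xs [] with rfl | hxs
    · intro h
      have : y = 0 := gr_singleton.mp h
      subst this
      exact ⟨ga_singleton.mpr rfl, by simp [toA], by simp [toA], by simp [toA, lastL], by simp [toA, toR]⟩
    · intro h
      obtain ⟨hgr, hy, hm⟩ := (gr_snoc hxs y).mp h
      obtain ⟨hma, hmt⟩ := gr_inv xs hgr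
      have hlm := lastL_le_maxL xs
      obtain ⟨hGA, hasc, hmax, hlast, hinv⟩ := ih hgr
      have hAne : toA 0 xs ≠ [] := by
        intro hc
        have := length_toA xs 0
        rw [hc] at this
        exact hxs (List.length_eq_zero_iff.mp this.symm)
      rcases lt_or_ge y (maxL xs) with hc | hc
      · -- y < maxL xs, so y = maxL xs - 1, image letter is 0
        have hsnoc : toA 0 (xs ++ [y]) = toA 0 xs ++ [0] := by
          rw [toA_snoc]
          simp only [Nat.zero_max]
          rw [if_pos hc]
        refine ⟨?_, ?_, ?_, ?_, ?_⟩
        · rw [hsnoc]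
          exact (ga_snoc hAne 0).mpr ⟨hGA, by omega, Or.inl rfl⟩
        · rw [hsnoc, ascList_snoc hAne, ascList_snoc hxs, hasc,
            if_neg (by omega), if_neg (by omega)]
        · rw [hsnoc, maxL_snoc, maxL_snoc, hmax, max_eq_left (Nat.zero_le _),
            max_eq_left (le_of_lt hc)]
        · rw [hsnoc, lastL_snoc, lastL_snoc, maxL_snoc, max_eq_left (le_of_lt hc), if_pos hc]
        · rw [hsnoc, toR_snoc, hinv]
          simp only [Nat.zero_max, hmax]
          rw [if_pos (by omega)]
          congr 2
          omega
      · -- maxL xs ≤ y, image letter is y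
        have hsnoc : toA 0 (xs ++ [y]) = toA 0 xs ++ [y] := by
          rw [toA_snoc]
          simp only [Nat.zero_max]
          rw [if_neg (by omega)]
        refine ⟨?_, ?_, ?_, ?_, ?_⟩
        · rw [hsnoc]
          refine (ga_snoc hAne y).mpr ⟨hGA, by omega, Or.inr (by omega)⟩
        · rw [hsnoc, ascList_snoc hAne, ascList_snoc hxs, hasc, hlast]
          congr 1
          split_ifs <;> omega
        · rw [hsnoc, maxL_snoc, maxL_snoc, hmax]
        · rw [hsnoc, lastL_snoc, lastL_snoc, maxL_snoc, max_eq_right hc, if_neg (by omega)]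
        · rw [hsnoc, toR_snoc, hinv]
          simp only [Nat.zero_max, hmax]
          rw [if_neg (by omega)]


lemma main_toR : ∀ l : List ℕ, GA l →
    GR (toR 0 l) ∧ ascList (toR 0 l) = ascList l ∧ maxL (toR 0 l) = maxL l ∧
      lastL (toR 0 l) = (if lastL l < maxL l then maxL l - 1 else lastL l) ∧ toA 0 (toR 0 l) = l := by
  intro l
  induction l using List.reverseRecOn with
  | nil => intro h; exact absurd rfl h.1.1
  | append_singleton xs y ih =>
    rcases eq_or_ne xs [] with rfl | hxs
    · intro h
      have : y = 0 := ga_singleton.mp h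
      subst this
      exact ⟨gr_singleton.mpr rfl, by simp [toR], by simp [toR], by simp [toR, lastL], by simp [toA, toR]⟩
    · intro h
      obtain ⟨hga, hy, hor⟩ := (ga_snoc hxs y).mp h
      obtain ⟨hma, hto⟩ := ga_inv xs hga
      have hlm := lastL_le_maxL xs
      obtain ⟨hGR, hasc, hmax, hlast, hinv⟩ := ih hga
      have hRne : toR 0 xs ≠ [] := by
        intro hc
        have := length_toR xs 0
        rw [hc] at this
        exact hxs (List.length_eq_zero_iff.mp this.symm)
      rcases hor with rfl | hc
      · -- y = 0, image letter is maxL xs - 1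
        have hsnoc : toR 0 (xs ++ [0]) = toR 0 xs ++ [maxL xs - 1] := by
          rw [toR_snoc]
          simp only [Nat.zero_max]
          split_ifs with h0
          · rfl
          · congr 2
            omega
        refine ⟨?_, ?_, ?_, ?_, ?_⟩
        · rw [hsnoc]
          exact (gr_snoc hRne _).mpr ⟨hGR, by omega, by omega⟩
        · rw [hsnoc, ascList_snoc hRne, ascList_snoc hxs, hasc, hlast]
          congr 1
          split_ifs <;> omega
        · rw [hsnoc, maxL_snoc, maxL_snoc, hmax]
          rcases hto with h0 | h0 <;> [skip; skip] <;>
            · rw [max_eq_left (by omega), max_eq_left (by omega)]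
        · rw [hsnoc, lastL_snoc, lastL_snoc, maxL_snoc, max_eq_left (Nat.zero_le _)]
          split_ifs <;> omega
        · rw [hsnoc, toA_snoc, hinv]
          simp only [Nat.zero_max, hmax]
          congr 2
          split_ifs <;> omega
      · -- maxL xs ≤ y, image letter is y
        have hsnoc : toR 0 (xs ++ [y]) = toR 0 xs ++ [y] := by
          rw [toR_snoc]
          simp only [Nat.zero_max]
          rw [if_neg (by omega)]
        refine ⟨?_, ?_, ?_, ?_, ?_⟩
        · rw [hsnoc]
          exact (gr_snoc hRne _).mpr ⟨hGR, by omega, by omega⟩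
        · rw [hsnoc, ascList_snoc hRne, ascList_snoc hxs, hasc, hlast]
          congr 1
          rcases hto with h0 | h0 <;> (split_ifs <;> omega)
        · rw [hsnoc, maxL_snoc, maxL_snoc, hmax]
        · rw [hsnoc, lastL_snoc, lastL_snoc, maxL_snoc, max_eq_right hc, if_neg (by omega)]
        · rw [hsnoc, toA_snoc, hinv]
          simp only [Nat.zero_max, hmax]
          rw [if_neg (by omega)]


def allowed (m a : ℕ) : Finset ℕ := insert 0 (Finset.Icc (max m 1) (a + 1))

lemma mem_allowed_iff {l : List ℕ} (hl : GA l) (y : ℕ) :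
    y ∈ allowed (maxL l) (ascList l) ↔ GA (l ++ [y]) := by
  obtain ⟨hma, -⟩ := ga_inv l hl
  rw [ga_snoc hl.1.1 y]
  simp only [allowed, Finset.mem_insert, Finset.mem_Icc]
  constructor
  · rintro (rfl | ⟨h1, h2⟩)
    · exact ⟨hl, by omega, Or.inl rfl⟩
    · exact ⟨hl, h2, Or.inr (by omega)⟩
  · rintro ⟨-, h2, (rfl | h3)⟩
    · exact Or.inl rfl
    · rcases Nat.eq_zero_or_pos y with rfl | hy
      · exact Or.inl rfl
      · exact Or.inr ⟨by omega, h2⟩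

def NN : ℕ → ℕ → ℕ → ℕ → ℕ
  | 0, _, _, _ => 1
  | d + 1, m, a, t => ∑ y ∈ allowed m a, NN d (max m y) (a + if t < y then 1 else 0) y

def EE : ℕ → List ℕ → Finset (List ℕ)
  | 0, l => {l}
  | d + 1, l => (allowed (maxL l) (ascList l)).biUnion (fun y => EE d (l ++ [y]))

lemma mem_EE : ∀ d (l : List ℕ), GA l → ∀ x, (x ∈ EE d l ↔ GA x ∧ x.length = l.length + d ∧ l <+: x) := by
  intro d
  induction d with
  | zero =>
    intro l hl x
    simp only [EE, Finset.mem_singleton]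
    constructor
    · rintro rfl; exact ⟨hl, by omega, List.prefix_refl _⟩
    · rintro ⟨-, hlen, hpre⟩
      exact (List.IsPrefix.eq_of_length hpre (by omega)).symm
  | succ d ih =>
    intro l hl x
    simp only [EE, Finset.mem_biUnion]
    constructor
    · rintro ⟨y, hy, hx⟩
      have hga : GA (l ++ [y]) := (mem_allowed_iff hl y).mp hy
      obtain ⟨h1, h2, h3⟩ := (ih (l ++ [y]) hga x).mp hx
      refine ⟨h1, by simp at h2 ⊢; omega, ((l.prefix_append [y]).trans h3)⟩
    · rintro ⟨hx, hlen, r, rfl⟩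
      cases r with
      | nil => simp at hlen
      | cons y r' =>
        have heq : l ++ y :: r' = (l ++ [y]) ++ r' := by simp
        have hga : GA (l ++ [y]) := by
          rw [heq] at hx
          exact ga_of_append r' (l ++ [y]) (by simp) hx
        refine ⟨y, (mem_allowed_iff hl y).mpr hga, ?_⟩
        rw [ih (l ++ [y]) hga]
        refine ⟨hx, by simp at hlen ⊢; omega, ?_⟩
        rw [heq]
        exact (l ++ [y]).prefix_append r'

lemma prefix_getD_len {l x : List ℕ} {y : ℕ} (h : (l ++ [y]) <+: x) : x.getD l.length 0 = y := by
  obtain ⟨r, rfl⟩ := h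
  rw [List.append_assoc]
  rw [List.getD_append_right l ([y] ++ r) 0 l.length (le_refl _)]
  simp

lemma card_EE : ∀ d (l : List ℕ), GA l → (EE d l).card = NN d (maxL l) (ascList l) (lastL l) := by
  intro d
  induction d with
  | zero => intro l hl; simp [EE, NN]
  | succ d ih =>
    intro l hl
    rw [show EE (d+1) l = (allowed (maxL l) (ascList l)).biUnion (fun y => EE d (l ++ [y])) from rfl]
    rw [Finset.card_biUnion]
    · rw [show NN (d+1) (maxL l) (ascList l) (lastL l) =
        ∑ y ∈ allowed (maxL l) (ascList l),
          NN d (max (maxL l) y) (ascList l + if lastL l < y then 1 else 0) y from rfl]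
      refine Finset.sum_congr rfl ?_
      intro y hy
      have hga : GA (l ++ [y]) := (mem_allowed_iff hl y).mp hy
      rw [ih (l ++ [y]) hga, maxL_snoc, ascList_snoc hl.1.1, lastL_snoc]
    · intro y1 h1 y2 h2 hne
      simp only [Function.onFun]
      rw [Finset.disjoint_left]
      intro x hx1 hx2
      have g1 := ((mem_EE d (l ++ [y1]) ((mem_allowed_iff hl y1).mp h1) x).mp hx1).2.2
      have g2 := ((mem_EE d (l ++ [y2]) ((mem_allowed_iff hl y2).mp h2) x).mp hx2).2.2
      exact hne ((prefix_getD_len g1).symm.trans (prefix_getD_len g2))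


open PowerSeries

noncomputable def Cs : PowerSeries ℤ := PowerSeries.mk (fun n => (catalan n : ℤ))

@[simp] lemma coeff_Cs (n : ℕ) : (PowerSeries.coeff n) Cs = (catalan n : ℤ) := by
  simp [Cs]

lemma hC : Cs = 1 + PowerSeries.X * Cs ^ 2 := by
  ext n
  cases n with
  | zero =>
    simp [PowerSeries.coeff_zero_eq_constantCoeff, map_add, map_mul, map_pow]
  | succ n =>
    rw [map_add, PowerSeries.coeff_one, if_neg (Nat.succ_ne_zero n), zero_add,
      PowerSeries.coeff_succ_X_mul, pow_two, PowerSeries.coeff_mul]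
    simp only [coeff_Cs]
    rw [catalan_succ' n]
    push_cast
    rfl

lemma key3 : Cs ^ 3 = 1 + 3 * PowerSeries.X * Cs ^ 3 + PowerSeries.X ^ 3 * Cs ^ 6 := by
  linear_combination (PowerSeries.X ^ 2 * Cs ^ 4 + PowerSeries.X * Cs ^ 3
    - PowerSeries.X * Cs ^ 2 + Cs ^ 2 + Cs + 1) * hC

lemma keyc : Cs = 1 + PowerSeries.X * Cs + PowerSeries.X ^ 2 * Cs ^ 3 := by
  linear_combination (PowerSeries.X * Cs + 1) * hC

noncomputable def Ts (g : ℕ) : PowerSeries ℤ := Cs ^ 3 * (1 + PowerSeries.X * Cs ^ 3) ^ g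

noncomputable def Bs (g : ℕ) : PowerSeries ℤ := (1 + PowerSeries.X ^ 2 * Cs ^ 3) * Ts g

lemma geomTs (g : ℕ) : PowerSeries.X * (∑ j ∈ Finset.range (g + 1), Ts j)
    = (1 + PowerSeries.X * Cs ^ 3) ^ (g + 1) - 1 := by
  have h := geom_sum_mul (1 + PowerSeries.X * Cs ^ 3) (g + 1)
  rw [← h, Finset.mul_sum, Finset.sum_mul]
  refine Finset.sum_congr rfl ?_
  intro j hj
  unfold Ts
  ring

lemma S1 (g : ℕ) : Ts g = 1 + PowerSeries.X * (Bs g + Ts g + ∑ j ∈ Finset.range (g + 1), Ts j) := by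
  rw [mul_add, mul_add, geomTs g]
  unfold Bs Ts
  rw [pow_succ]
  linear_combination ((1 + PowerSeries.X * Cs ^ 3) ^ g) * key3

lemma S2 (g : ℕ) : Bs g = 1 + PowerSeries.X * (Bs g + Ts (g + 1) + ∑ j ∈ Finset.range (g + 1), Ts j) := by
  rw [mul_add, mul_add, geomTs g]
  unfold Bs Ts
  rw [pow_succ]
  linear_combination ((1 + PowerSeries.X * Cs ^ 3) ^ g) * key3


lemma allowed_eq {m a : ℕ} (hm : 1 ≤ m) : allowed m a = insert 0 (Finset.Icc m (a + 1)) := by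
  unfold allowed
  rw [max_eq_left hm]

lemma Icc_split {m b : ℕ} (h : m ≤ b) : Finset.Icc m b = insert m (Finset.Icc (m + 1) b) := by
  ext x
  simp only [Finset.mem_Icc, Finset.mem_insert]
  omega

@[simp] lemma constantCoeff_Cs : PowerSeries.constantCoeff Cs = 1 := by
  simp [Cs]

@[simp] lemma coeff_zero_Ts (g : ℕ) : PowerSeries.coeff 0 (Ts g) = 1 := by
  rw [PowerSeries.coeff_zero_eq_constantCoeff]
  simp [Ts]

@[simp] lemma coeff_zero_Bs (g : ℕ) : PowerSeries.coeff 0 (Bs g) = 1 := by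
  rw [PowerSeries.coeff_zero_eq_constantCoeff]
  simp [Bs, Ts]

lemma NN_coeff : ∀ d m a, 1 ≤ m → m ≤ a →
    ((NN d m a m : ℤ) = PowerSeries.coeff d (Ts (a - m)) ∧
     (NN d m a 0 : ℤ) = PowerSeries.coeff d (Bs (a - m))) := by
  intro d
  induction d with
  | zero => intro m a hm hma; constructor <;> simp [NN]
  | succ d ih =>
    intro m a hm hma
    have h0 : (0 : ℕ) ∉ Finset.Icc m (a + 1) := by
      simp only [Finset.mem_Icc]; omega
    have h1 : m ∉ Finset.Icc (m + 1) (a + 1) := by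
      simp only [Finset.mem_Icc]; omega
    have hsplit : Finset.Icc m (a + 1) = insert m (Finset.Icc (m + 1) (a + 1)) :=
      Icc_split (by omega)
    have hIcc : ∀ t : ℕ, t ≤ m →
        (∑ y ∈ Finset.Icc (m + 1) (a + 1),
          (NN d (max m y) (a + if t < y then 1 else 0) y : ℤ))
        = ∑ j ∈ Finset.range (a - m + 1), PowerSeries.coeff d (Ts j) := by
      intro t ht
      refine Finset.sum_bij' (fun y _ => a + 1 - y) (fun j _ => a + 1 - j) ?_ ?_ ?_ ?_ ?_
      · intro y hy
        simp only [Finset.mem_Icc] at hy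
        simp only [Finset.mem_range]
        omega
      · intro j hj
        simp only [Finset.mem_range] at hj
        simp only [Finset.mem_Icc]
        omega
      · intro y hy
        simp only [Finset.mem_Icc] at hy
        omega
      · intro j hj
        simp only [Finset.mem_range] at hj
        omega
      · intro y hy
        simp only [Finset.mem_Icc] at hy
        rw [max_eq_right (by omega), if_pos (by omega)]
        have := (ih y (a + 1) (by omega) (by omega)).1
        rw [this]
    have hg1 : a + 1 - m = (a - m) + 1 := by omega
    constructor
    · -- top
      have hdec : PowerSeries.coeff (d + 1) (Ts (a - m))
          = PowerSeries.coeff d (Bs (a - m)) + PowerSeries.coeff d (Ts (a - m))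
            + ∑ j ∈ Finset.range (a - m + 1), PowerSeries.coeff d (Ts j) := by
        conv_lhs => rw [S1 (a - m)]
        rw [map_add, PowerSeries.coeff_one, if_neg (by omega), zero_add,
          PowerSeries.coeff_succ_X_mul, map_add, map_add, map_sum]
      simp only [NN]
      rw [allowed_eq hm, Finset.sum_insert h0, hsplit, Finset.sum_insert h1]
      push_cast
      simp only [max_self, Nat.max_zero, Nat.not_lt_zero, if_false, add_zero, lt_self_iff_false]
      rw [(ih m a hm hma).1, (ih m a hm hma).2, hIcc m (le_refl m), hdec]
      ring
    · -- bot
      have hdec : PowerSeries.coeff (d + 1) (Bs (a - m))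
          = PowerSeries.coeff d (Bs (a - m)) + PowerSeries.coeff d (Ts ((a - m) + 1))
            + ∑ j ∈ Finset.range (a - m + 1), PowerSeries.coeff d (Ts j) := by
        conv_lhs => rw [S2 (a - m)]
        rw [map_add, PowerSeries.coeff_one, if_neg (by omega), zero_add,
          PowerSeries.coeff_succ_X_mul, map_add, map_add, map_sum]
      simp only [NN]
      rw [allowed_eq hm, Finset.sum_insert h0, hsplit, Finset.sum_insert h1]
      push_cast
      simp only [max_self, Nat.max_zero, Nat.not_lt_zero, if_false, add_zero, lt_self_iff_false]
      rw [if_pos (show 0 < m by omega), (ih m a hm hma).2, (ih m (a + 1) hm (by omega)).1,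
        hIcc 0 (by omega), hg1, hdec]
      ring

lemma NN_root : ∀ d, (NN d 0 0 0 : ℤ) = (catalan (d + 1) : ℤ) := by
  intro d
  induction d with
  | zero => simp [NN]
  | succ d ih =>
    have hallowed : allowed 0 0 = insert 0 {1} := by
      unfold allowed
      rw [max_eq_right (Nat.zero_le 1)]
      congr 1
    simp only [NN]
    rw [hallowed, Finset.sum_insert (by simp), Finset.sum_singleton]
    push_cast
    norm_num
    rw [ih]
    have h11 := (NN_coeff d 1 1 (le_refl 1) (le_refl 1)).1
    rw [show (1 : ℕ) - 1 = 0 from rfl] at h11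
    rw [h11]
    have : PowerSeries.coeff (d + 2) Cs
        = PowerSeries.coeff (d + 2) (1 + PowerSeries.X * Cs + PowerSeries.X ^ 2 * Cs ^ 3) := by
      rw [← keyc]
    rw [map_add, map_add, PowerSeries.coeff_one, if_neg (by omega), zero_add,
      PowerSeries.coeff_succ_X_mul,
      show PowerSeries.X ^ 2 * Cs ^ 3 = PowerSeries.X * (PowerSeries.X * Cs ^ 3) by ring,
      PowerSeries.coeff_succ_X_mul, PowerSeries.coeff_succ_X_mul] at this
    simp only [coeff_Cs] at this
    have hts0 : Ts 0 = Cs ^ 3 := by simp [Ts]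
    rw [hts0, show d + 1 + 1 = d + 2 from rfl]
    omega


lemma zero_prefix {x : List ℕ} (hx : x ≠ []) (h0 : x.getD 0 0 = 0) : [0] <+: x := by
  cases x with
  | nil => exact absurd rfl hx
  | cons a t =>
    have : a = 0 := by simpa using h0
    subst this
    exact ⟨t, rfl⟩

end Stmt19

open Stmt19

/-- There is an ascent-preserving bijection between restricted ascent sequences of
length `n` and 021-avoiding ascent sequences of length `n`; consequently the latter are
counted by the Catalan numbers. -/
theorem stmt19 (n : ℕ) (hn : 1 ≤ n) :
    (∃ e : {l : List ℕ // l.length = n ∧ IsRestrictedAscSeq l} ≃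
           {l : List ℕ // l.length = n ∧ IsAscSeq l ∧ ¬ Contains021 l},
      ∀ x, ascList ((e x) : List ℕ) = ascList (x : List ℕ)) ∧
    {l : List ℕ | l.length = n ∧ IsAscSeq l ∧ ¬ Contains021 l}.ncard = catalan n := by
  constructor
  · refine ⟨⟨fun x => ⟨toA 0 x.1, ?_, ?_⟩, fun y => ⟨toR 0 y.1, ?_, ?_⟩, ?_, ?_⟩, ?_⟩
    · rw [length_toA]; exact x.2.1
    · exact (main_toA x.1 x.2.2).1
    · rw [length_toR]; exact y.2.1
    · exact (main_toR y.1 ⟨y.2.2.1, y.2.2.2⟩).1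
    · intro x
      exact Subtype.ext ((main_toA x.1 x.2.2).2.2.2.2)
    · intro y
      exact Subtype.ext ((main_toR y.1 ⟨y.2.2.1, y.2.2.2⟩).2.2.2.2)
    · intro x
      exact (main_toA x.1 x.2.2).2.1
  · have hGA0 : GA [0] := ga_singleton.mpr rfl
    have hset : {l : List ℕ | l.length = n ∧ IsAscSeq l ∧ ¬ Contains021 l}
        = ↑(EE (n - 1) [0]) := by
      ext x
      simp only [Set.mem_setOf_eq, Finset.coe_sort_coe, Finset.mem_coe]
      rw [mem_EE (n - 1) [0] hGA0 x]
      constructor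
      · rintro ⟨hlen, h1, h2⟩
        exact ⟨⟨h1, h2⟩, by simp; omega, zero_prefix h1.1 h1.2.1⟩
      · rintro ⟨hga, hlen, -⟩
        refine ⟨by simp at hlen; omega, hga.1, hga.2⟩
    rw [hset, Set.ncard_coe_finset, card_EE (n - 1) [0] hGA0]
    have hr : (NN (n - 1) 0 0 0 : ℤ) = (catalan (n - 1 + 1) : ℤ) := NN_root (n - 1)
    rw [show n - 1 + 1 = n by omega] at hr
    have h2 : NN (n - 1) (maxL [0]) (ascList [0]) (lastL [0]) = NN (n - 1) 0 0 0 := by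
      norm_num [lastL, maxL]
    rw [h2]
    exact_mod_cast hr
end
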